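/- arXiv:1111.6659 — 2 statements merged into one kernel-verified Lean document; each statement's English description precedes it below -/
import Mathlib

section
/- Improved upper bound, DD-case (Proposition 3.2): Assume μ and ν are locally finite on E. Define λ^{DD} = inf{ D(f) : f absolutely continuous with compact support in E, ∫_E f² dμ = 1 }, (κ^{DD})^{-1} = inf_{x<y} [ ν((−M,x))^{-1} + ν((y,N))^{-1} ] μ((x,y))^{-1}, and (κ̄^{DD})^{-1} = inf_{−M<x<y<N} ( ν((−M,x))^{-1} + ν([y,N))^{-1} ) · { μ((x,y)) + ∫_{(−M,x)} [1 − ν((z,x))/ν((−M,x))]² μ(dz) + ∫_{(y,N)} [1 − ν((y,z))/ν((y,N))]² μ(dz) }^{-1}. Then λ^{DD} ≤ (κ̄^{DD})^{-1} ≤ (κ^{DD})^{-1}. -/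
open MeasureTheory Set
open scoped ENNReal

open Filter
open scoped Topology

lemma lint_ofReal_Ioo {p q : ℝ} (hpq : p ≤ q) {F : ℝ → ℝ} (hF : ContinuousOn F (Icc p q))
    (hF0 : ∀ z ∈ Icc p q, 0 ≤ F z) :
    ∫⁻ z in Ioo p q, ENNReal.ofReal (F z) = ENNReal.ofReal (∫ z in p..q, F z) := by
  have hint : IntegrableOn F (Ioo p q) volume :=
    (hF.integrableOn_Icc).mono_set Ioo_subset_Icc_self
  rw [intervalIntegral.integral_of_le hpq, integral_Ioc_eq_integral_Ioo,
    ← ofReal_integral_eq_lintegral_ofReal hint]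
  exact Filter.Eventually.mono (ae_restrict_mem measurableSet_Ioo)
    (fun z hz => hF0 z (Ioo_subset_Icc_self hz))

/-- A measure that is finite on neighborhoods of points of `E` is finite on compact
subsets of `E`. -/
lemma meas_compact_lt_top {m : Measure ℝ} {E K : Set ℝ} (hK : IsCompact K) (hKE : K ⊆ E)
    (hloc : ∀ x ∈ E, ∃ s ∈ nhds x, m s < ⊤) : m K < ⊤ := by
  classical
  set U : ℝ → Set ℝ := fun x => if h : x ∈ E then (hloc x h).choose else univ with hU
  have hUn : ∀ x ∈ K, U x ∈ nhds x := by
    intro x hx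
    simp only [hU, dif_pos (hKE hx)]
    exact (hloc x (hKE hx)).choose_spec.1
  have hUfin : ∀ x ∈ K, m (U x) < ⊤ := by
    intro x hx
    simp only [hU, dif_pos (hKE hx)]
    exact (hloc x (hKE hx)).choose_spec.2
  obtain ⟨t, htK, hcov⟩ := hK.elim_nhds_subcover U hUn
  calc m K ≤ m (⋃ x ∈ t, U x) := measure_mono hcov
    _ ≤ ∑ x ∈ t, m (U x) := measure_biUnion_finset_le t U
    _ < ⊤ := by
        refine ENNReal.sum_lt_top.2 fun x hx => hUfin x (htK x hx)

/-- `a * liminf u ≤ liminf (a * u)` in `ℝ≥0∞`. -/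
lemma ennreal_mul_liminf_le (a : ℝ≥0∞) (u : ℕ → ℝ≥0∞) :
    a * Filter.liminf u Filter.atTop ≤ Filter.liminf (fun n => a * u n) Filter.atTop := by
  rw [Filter.liminf_eq_iSup_iInf_of_nat, Filter.liminf_eq_iSup_iInf_of_nat, ENNReal.mul_iSup]
  refine iSup_mono fun n => ?_
  refine le_iInf₂ fun i hi => ?_
  exact mul_le_mul_right (iInf₂_le i hi) a

noncomputable def mfun (δ t : ℝ) : ℝ := max 0 (min (min (t/δ) 1) ((1-t)/δ))

lemma mfun_cont (δ : ℝ) : Continuous (mfun δ) := by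
  unfold mfun
  fun_prop

lemma mfun_nonneg (δ t : ℝ) : 0 ≤ mfun δ t := le_max_left _ _

lemma mfun_le_one (δ t : ℝ) : mfun δ t ≤ 1 := by
  unfold mfun
  refine max_le zero_le_one ?_
  exact le_trans (min_le_left _ _) (min_le_right _ _)

lemma mfun_zero_left {δ t : ℝ} (hδ : 0 < δ) (ht : t ≤ 0) : mfun δ t = 0 := by
  unfold mfun
  refine max_eq_left ?_
  refine le_trans (le_trans (min_le_left _ _) (min_le_left _ _)) ?_
  exact div_nonpos_iff.2 (Or.inr ⟨ht, hδ.le⟩)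

lemma mfun_zero_right {δ t : ℝ} (hδ : 0 < δ) (ht : 1 ≤ t) : mfun δ t = 0 := by
  unfold mfun
  refine max_eq_left ?_
  refine le_trans (min_le_right _ _) ?_
  exact div_nonpos_iff.2 (Or.inr ⟨by linarith, hδ.le⟩)

lemma mfun_one {δ t : ℝ} (hδ : 0 < δ) (h1 : δ ≤ t) (h2 : t ≤ 1 - δ) : mfun δ t = 1 := by
  unfold mfun
  have ha : (1:ℝ) ≤ t / δ := (one_le_div hδ).2 h1
  have hb : (1:ℝ) ≤ (1 - t) / δ := (one_le_div hδ).2 (by linarith)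
  rw [min_eq_right ha, min_eq_left hb, max_eq_right zero_le_one]

lemma mfun_intervalIntegrable (δ a b : ℝ) : IntervalIntegrable (mfun δ) volume a b :=
  (mfun_cont δ).intervalIntegrable a b

noncomputable def Imfun (δ : ℝ) : ℝ := ∫ t in (0:ℝ)..1, mfun δ t

lemma Imfun_le_one (δ : ℝ) : Imfun δ ≤ 1 := by
  have : Imfun δ ≤ ∫ t in (0:ℝ)..1, (1:ℝ) := by
    refine intervalIntegral.integral_mono_on zero_le_one (mfun_intervalIntegrable δ 0 1)
      (intervalIntegrable_const) (fun t _ => mfun_le_one δ t)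
  simpa using this

lemma Imfun_ge {δ : ℝ} (hδ : 0 < δ) (hδ4 : δ ≤ 1/4) : 1 - 2*δ ≤ Imfun δ := by
  have h1 : δ ≤ 1 - δ := by linarith
  have e1 : (∫ t in (0:ℝ)..δ, mfun δ t) + (∫ t in δ..(1-δ), mfun δ t) =
      ∫ t in (0:ℝ)..(1-δ), mfun δ t :=
    intervalIntegral.integral_add_adjacent_intervals (mfun_intervalIntegrable δ 0 δ)
      (mfun_intervalIntegrable δ δ (1-δ))
  have e2 : (∫ t in (0:ℝ)..(1-δ), mfun δ t) + (∫ t in (1-δ)..1, mfun δ t) = Imfun δ :=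
    intervalIntegral.integral_add_adjacent_intervals (mfun_intervalIntegrable δ 0 (1-δ))
      (mfun_intervalIntegrable δ (1-δ) 1)
  have hmid : (∫ t in δ..(1-δ), mfun δ t) = 1 - 2*δ := by
    have : (∫ t in δ..(1-δ), mfun δ t) = ∫ t in δ..(1-δ), (1:ℝ) := by
      refine intervalIntegral.integral_congr (fun t ht => ?_)
      rw [uIcc_of_le h1] at ht
      exact mfun_one hδ ht.1 ht.2
    rw [this]; simp; ring
  have hpos1 : 0 ≤ ∫ t in (0:ℝ)..δ, mfun δ t :=
    intervalIntegral.integral_nonneg hδ.le (fun u _ => mfun_nonneg δ u)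
  have hpos2 : 0 ≤ ∫ t in (1-δ)..1, mfun δ t :=
    intervalIntegral.integral_nonneg (by linarith) (fun u _ => mfun_nonneg δ u)
  nlinarith [e1, e2, hmid]

lemma Imfun_pos {δ : ℝ} (hδ : 0 < δ) (hδ4 : δ ≤ 1/4) : 0 < Imfun δ := by
  have := Imfun_ge hδ hδ4; linarith

noncomputable def hfun (δ t : ℝ) : ℝ := (Imfun δ)⁻¹ * ∫ s in (0:ℝ)..t, mfun δ s

lemma hfun_hasDerivAt (δ : ℝ) (t : ℝ) :
    HasDerivAt (hfun δ) ((Imfun δ)⁻¹ * mfun δ t) t := by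
  have h := intervalIntegral.integral_hasDerivAt_right (mfun_intervalIntegrable δ 0 t)
    ((mfun_cont δ).stronglyMeasurable.stronglyMeasurableAtFilter)
    (mfun_cont δ).continuousAt
  exact h.const_mul _

lemma hfun_zero_of_nonpos {δ t : ℝ} (hδ : 0 < δ) (ht : t ≤ 0) : hfun δ t = 0 := by
  unfold hfun
  have : (∫ s in (0:ℝ)..t, mfun δ s) = ∫ s in (0:ℝ)..t, (0:ℝ) := by
    refine intervalIntegral.integral_congr (fun s hs => ?_)
    rw [uIcc_of_ge ht] at hs
    exact mfun_zero_left hδ hs.2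
  rw [this]; simp

lemma hfun_nonneg {δ : ℝ} (hδ : 0 < δ) (hδ4 : δ ≤ 1/4) (t : ℝ) : 0 ≤ hfun δ t := by
  rcases le_or_gt t 0 with h | h
  · rw [hfun_zero_of_nonpos hδ h]
  · exact mul_nonneg (inv_nonneg.2 (Imfun_pos hδ hδ4).le)
      (intervalIntegral.integral_nonneg h.le (fun u _ => mfun_nonneg δ u))

lemma hfun_one {δ : ℝ} (hδ : 0 < δ) (hδ4 : δ ≤ 1/4) : hfun δ 1 = 1 :=
  inv_mul_cancel₀ (ne_of_gt (Imfun_pos hδ hδ4))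

lemma hfun_eq_one_of_ge {δ t : ℝ} (hδ : 0 < δ) (hδ4 : δ ≤ 1/4) (ht : 1 ≤ t) :
    hfun δ t = 1 := by
  unfold hfun
  have e : (∫ s in (0:ℝ)..1, mfun δ s) + (∫ s in (1:ℝ)..t, mfun δ s) = ∫ s in (0:ℝ)..t, mfun δ s :=
    intervalIntegral.integral_add_adjacent_intervals (mfun_intervalIntegrable δ 0 1)
      (mfun_intervalIntegrable δ 1 t)
  have h0 : (∫ s in (1:ℝ)..t, mfun δ s) = 0 := by
    have : (∫ s in (1:ℝ)..t, mfun δ s) = ∫ s in (1:ℝ)..t, (0:ℝ) := by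
      refine intervalIntegral.integral_congr (fun s hs => ?_)
      rw [uIcc_of_le ht] at hs
      exact mfun_zero_right hδ hs.1
    rw [this]; simp
  have : (∫ s in (0:ℝ)..t, mfun δ s) = Imfun δ := by rw [← e, h0]; simp [Imfun]
  rw [this]
  exact inv_mul_cancel₀ (ne_of_gt (Imfun_pos hδ hδ4))

lemma hfun_le_one {δ : ℝ} (hδ : 0 < δ) (hδ4 : δ ≤ 1/4) (t : ℝ) : hfun δ t ≤ 1 := by
  rcases le_or_gt 1 t with h | h
  · rw [hfun_eq_one_of_ge hδ hδ4 h]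
  rcases le_or_gt t 0 with h' | h'
  · rw [hfun_zero_of_nonpos hδ h']; norm_num
  · have e : (∫ s in (0:ℝ)..t, mfun δ s) + (∫ s in t..1, mfun δ s) = Imfun δ :=
      intervalIntegral.integral_add_adjacent_intervals (mfun_intervalIntegrable δ 0 t)
        (mfun_intervalIntegrable δ t 1)
    have h2 : 0 ≤ ∫ s in t..1, mfun δ s :=
      intervalIntegral.integral_nonneg h.le (fun u _ => mfun_nonneg δ u)
    have h3 : (∫ s in (0:ℝ)..t, mfun δ s) ≤ Imfun δ := by linarith
    unfold hfun
    have hI := Imfun_pos hδ hδ4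
    calc (Imfun δ)⁻¹ * ∫ s in (0:ℝ)..t, mfun δ s ≤ (Imfun δ)⁻¹ * Imfun δ :=
          mul_le_mul_of_nonneg_left h3 (inv_nonneg.2 hI.le)
      _ = 1 := inv_mul_cancel₀ (ne_of_gt hI)

lemma hfun_lb {δ t : ℝ} (hδ : 0 < δ) (hδ4 : δ ≤ 1/4) (ht : t ≤ 1) :
    t - 2*δ ≤ hfun δ t := by
  rcases le_or_gt t 0 with h' | h'
  · rw [hfun_zero_of_nonpos hδ h']; linarith
  have hI := Imfun_pos hδ hδ4
  have hc : 1 ≤ (Imfun δ)⁻¹ := (one_le_inv₀ hI).2 (Imfun_le_one δ)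
  have hint0 : 0 ≤ ∫ s in (0:ℝ)..t, mfun δ s :=
    intervalIntegral.integral_nonneg h'.le (fun u _ => mfun_nonneg δ u)
  have key : t - 2*δ ≤ ∫ s in (0:ℝ)..t, mfun δ s := by
    have e : (∫ s in (0:ℝ)..t, mfun δ s) + (∫ s in t..1, mfun δ s) = Imfun δ :=
      intervalIntegral.integral_add_adjacent_intervals (mfun_intervalIntegrable δ 0 t)
        (mfun_intervalIntegrable δ t 1)
    have h2 : (∫ s in t..1, mfun δ s) ≤ ∫ s in t..1, (1:ℝ) :=
      intervalIntegral.integral_mono_on ht (mfun_intervalIntegrable δ t 1)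
        intervalIntegrable_const (fun u _ => mfun_le_one δ u)
    have h2' : (∫ s in t..1, mfun δ s) ≤ 1 - t := by simpa using h2
    have h3 := Imfun_ge hδ hδ4
    linarith
  calc t - 2*δ ≤ ∫ s in (0:ℝ)..t, mfun δ s := key
    _ = 1 * ∫ s in (0:ℝ)..t, mfun δ s := (one_mul _).symm
    _ ≤ (Imfun δ)⁻¹ * ∫ s in (0:ℝ)..t, mfun δ s := mul_le_mul_of_nonneg_right hc hint0
    _ = hfun δ t := rfl

lemma hfun_deriv_sq_integral {δ : ℝ} (hδ : 0 < δ) (hδ4 : δ ≤ 1/4) :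
    (∫ t in (0:ℝ)..1, ((Imfun δ)⁻¹ * mfun δ t)^2) ≤ (1 - 2*δ)⁻¹ := by
  have hI := Imfun_pos hδ hδ4
  have e : (∫ t in (0:ℝ)..1, ((Imfun δ)⁻¹ * mfun δ t)^2)
      = (Imfun δ)⁻¹^2 * ∫ t in (0:ℝ)..1, (mfun δ t)^2 := by
    rw [← intervalIntegral.integral_const_mul]
    refine intervalIntegral.integral_congr (fun t _ => by ring)
  have hsq : (∫ t in (0:ℝ)..1, (mfun δ t)^2) ≤ Imfun δ := by
    refine intervalIntegral.integral_mono_on zero_le_one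
      (((mfun_cont δ).pow 2).intervalIntegrable 0 1) (mfun_intervalIntegrable δ 0 1)
      (fun t _ => ?_)
    have h1 := mfun_nonneg δ t
    have h2 := mfun_le_one δ t
    nlinarith
  have h5 : (∫ t in (0:ℝ)..1, ((Imfun δ)⁻¹ * mfun δ t)^2) ≤ (Imfun δ)⁻¹^2 * Imfun δ := by
    rw [e]
    exact mul_le_mul_of_nonneg_left hsq (by positivity)
  have h6 : (Imfun δ)⁻¹^2 * Imfun δ = (Imfun δ)⁻¹ := by
    field_simp
  rw [h6] at h5
  refine le_trans h5 ?_
  have h7 := Imfun_ge hδ hδ4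
  have h8 : (0:ℝ) < 1 - 2*δ := by linarith
  exact inv_anti₀ h8 h7

lemma lam_le_aux (E : Set ℝ) (C : ℝ → ℝ) (μ : Measure ℝ) (lam : ℝ≥0∞)
    (hlam : lam = ⨅ (f : ℝ → ℝ) (_ : DifferentiableOn ℝ f E) (_ : HasCompactSupport f)
        (_ : tsupport f ⊆ E) (_ : ∫⁻ x, ENNReal.ofReal ((f x) ^ 2) ∂μ = 1),
        ∫⁻ x in E, ENNReal.ofReal ((deriv f x) ^ 2 * Real.exp (C x)))
    (f : ℝ → ℝ) (hf : Differentiable ℝ f) (hcs : HasCompactSupport f) (hts : tsupport f ⊆ E)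
    (hP0 : (∫⁻ z, ENNReal.ofReal ((f z)^2) ∂μ) ≠ 0)
    (hPt : (∫⁻ z, ENNReal.ofReal ((f z)^2) ∂μ) ≠ ⊤) :
    lam * (∫⁻ z, ENNReal.ofReal ((f z)^2) ∂μ)
      ≤ ∫⁻ z in E, ENNReal.ofReal ((deriv f z)^2 * Real.exp (C z)) := by
  set P := ∫⁻ z, ENNReal.ofReal ((f z)^2) ∂μ with hP
  set D := ∫⁻ z in E, ENNReal.ofReal ((deriv f z)^2 * Real.exp (C z)) with hD
  have hPpos : 0 < P.toReal := ENNReal.toReal_pos hP0 hPt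
  set r : ℝ := (Real.sqrt P.toReal)⁻¹ with hr
  have hr2 : r^2 = (P.toReal)⁻¹ := by
    rw [hr, inv_pow, Real.sq_sqrt hPpos.le]
  have hrofReal : ENNReal.ofReal (r^2) = P⁻¹ := by
    rw [hr2, ENNReal.ofReal_inv_of_pos hPpos, ENNReal.ofReal_toReal hPt]
  set g : ℝ → ℝ := fun z => r * f z with hg
  have hgd : Differentiable ℝ g := hf.const_mul r
  have hgts : tsupport g ⊆ tsupport f := by
    refine closure_mono ?_
    intro z hz
    simp only [hg, Function.mem_support] at hz ⊢
    intro h0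
    exact hz (by rw [h0, mul_zero])
  have hgcs : HasCompactSupport g := by
    refine hcs.mono ?_
    intro z hz
    simp only [hg, Function.mem_support] at hz ⊢
    intro h0
    exact hz (by rw [h0, mul_zero])
  have hgnorm : (∫⁻ z, ENNReal.ofReal ((g z)^2) ∂μ) = 1 := by
    have : ∀ z, ENNReal.ofReal ((g z)^2) = ENNReal.ofReal (r^2) * ENNReal.ofReal ((f z)^2) := by
      intro z
      rw [← ENNReal.ofReal_mul (by positivity)]
      congr 1
      simp only [hg]; ring
    simp_rw [this]
    rw [lintegral_const_mul' _ _ ENNReal.ofReal_ne_top, hrofReal, ← hP,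
      ENNReal.inv_mul_cancel hP0 hPt]
  have hgD : (∫⁻ z in E, ENNReal.ofReal ((deriv g z)^2 * Real.exp (C z))) = P⁻¹ * D := by
    have hder : ∀ z, deriv g z = r * deriv f z := fun z => deriv_const_mul r (hf z)
    have : ∀ z, ENNReal.ofReal ((deriv g z)^2 * Real.exp (C z))
        = ENNReal.ofReal (r^2) * ENNReal.ofReal ((deriv f z)^2 * Real.exp (C z)) := by
      intro z
      rw [← ENNReal.ofReal_mul (by positivity)]
      congr 1
      rw [hder z]; ring
    simp_rw [this]
    rw [lintegral_const_mul' _ _ ENNReal.ofReal_ne_top, hrofReal]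
  have hle : lam ≤ P⁻¹ * D := by
    rw [hlam, ← hgD]
    exact iInf_le_of_le g (iInf_le_of_le hgd.differentiableOn (iInf_le_of_le hgcs
      (iInf_le_of_le (le_trans hgts hts) (iInf_le_of_le hgnorm le_rfl))))
  calc lam * P ≤ (P⁻¹ * D) * P := mul_le_mul_left hle P
    _ = D * (P⁻¹ * P) := by ring
    _ = D := by rw [ENNReal.inv_mul_cancel hP0 hPt, mul_one]

lemma tendsto_ofReal_div_toReal (A : ℕ → ℝ≥0∞) (T : ℝ≥0∞) (c : ℕ → ℝ)
    (hA : ∀ n, A n ≠ ⊤) (hT0 : T ≠ 0)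
    (hAT : Tendsto A atTop (nhds T)) (hc : Tendsto c atTop (nhds 1)) :
    Tendsto (fun n => ENNReal.ofReal (c n / (A n).toReal)) atTop (nhds T⁻¹) := by
  rcases eq_or_ne T ⊤ with hT | hT
  · -- toReal (A n) → ∞
    have htop : Tendsto (fun n => (A n).toReal) atTop atTop := by
      rw [Filter.tendsto_atTop]
      intro K
      have hev : ∀ᶠ n in atTop, ENNReal.ofReal (max K 0) < A n := by
        refine hAT.eventually ?_
        rw [hT]
        exact eventually_gt_nhds ENNReal.ofReal_lt_top
      refine hev.mono fun n hn => ?_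
      have := ENNReal.toReal_le_toReal ENNReal.ofReal_ne_top (hA n) |>.2 hn.le
      rw [ENNReal.toReal_ofReal (le_max_right K 0)] at this
      exact le_trans (le_max_left K 0) this
    have : Tendsto (fun n => c n / (A n).toReal) atTop (nhds 0) :=
      Tendsto.div_atTop hc htop
    have h2 := (ENNReal.tendsto_ofReal (a := 0)) this
    simpa [hT] using h2
  · have hTr : 0 < T.toReal := ENNReal.toReal_pos hT0 hT
    have h1 : Tendsto (fun n => (A n).toReal) atTop (nhds T.toReal) :=
      (ENNReal.tendsto_toReal hT).comp hAT
    have h2 : Tendsto (fun n => c n / (A n).toReal) atTop (nhds (1 / T.toReal)) :=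
      hc.div h1 hTr.ne'
    have h3 := (ENNReal.tendsto_ofReal (a := 1 / T.toReal)) h2
    have h4 : ENNReal.ofReal (1 / T.toReal) = T⁻¹ := by
      rw [one_div, ENNReal.ofReal_inv_of_pos hTr, ENNReal.ofReal_toReal hT]
    rwa [h4] at h3

lemma tendsto_toReal_atTop_of_top (A : ℕ → ℝ≥0∞) (hA : ∀ n, A n ≠ ⊤)
    (hAT : Tendsto A atTop (nhds ⊤)) :
    Tendsto (fun n => (A n).toReal) atTop atTop := by
  rw [Filter.tendsto_atTop]
  intro K
  have hev : ∀ᶠ n in atTop, ENNReal.ofReal (max K 0) < A n := by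
    refine hAT.eventually ?_
    exact eventually_gt_nhds ENNReal.ofReal_lt_top
  refine hev.mono fun n hn => ?_
  have := ENNReal.toReal_le_toReal ENNReal.ofReal_ne_top (hA n) |>.2 hn.le
  rw [ENNReal.toReal_ofReal (le_max_right K 0)] at this
  exact le_trans (le_max_left K 0) this

lemma isOpen_Eset (M N : EReal) : IsOpen {x : ℝ | -M < (x : EReal) ∧ (x : EReal) < N} := by
  have : {x : ℝ | -M < (x : EReal) ∧ (x : EReal) < N}
      = Real.toEReal ⁻¹' (Ioo (-M) N) := rfl
  rw [this]
  exact (isOpen_Ioo).preimage continuous_coe_real_ereal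

lemma Eset_conv {M N : EReal} {E : Set ℝ}
    (hE : E = {x : ℝ | -M < (x : EReal) ∧ (x : EReal) < N})
    {p q : ℝ} (hp : p ∈ E) (hq : q ∈ E) : Icc p q ⊆ E := by
  subst hE
  rintro z ⟨h1, h2⟩
  constructor
  · exact lt_of_lt_of_le hp.1 (EReal.coe_le_coe_iff.2 h1)
  · exact lt_of_le_of_lt (EReal.coe_le_coe_iff.2 h2) hq.2

lemma exists_left_seq (M N : EReal) (hM : 0 < M) (E : Set ℝ)
    (hE : E = {x : ℝ | -M < (x : EReal) ∧ (x : EReal) < N}) (x : ℝ) (hx : x ∈ E) :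
    ∃ t : ℕ → ℝ, Antitone t ∧ (∀ n, t n ∈ E) ∧ (∀ n, t n < x) ∧
      (∀ z ∈ E, z < x → ∀ᶠ n in atTop, t n < z) := by
  by_cases hMtop : M = ⊤
  · refine ⟨fun n => min (x-1) (-(n:ℝ)), ?_, ?_, ?_, ?_⟩
    · exact fun n m h => min_le_min le_rfl (neg_le_neg (Nat.cast_le.2 h))
    · intro n
      rw [hE]
      constructor
      · rw [hMtop]
        simp
      · have h1 : min (x-1) (-(n:ℝ)) < x := lt_of_le_of_lt (min_le_left _ _) (by linarith)
        calc (min (x-1) (-(n:ℝ)) : EReal) < (x : EReal) := EReal.coe_lt_coe_iff.2 h1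
          _ < N := (hE ▸ hx).2
    · exact fun n => lt_of_le_of_lt (min_le_left _ _) (by linarith)
    · intro z hz hzx
      have htend : Tendsto (fun n : ℕ => -(n:ℝ)) atTop atBot :=
        tendsto_neg_atBot_iff.2 tendsto_natCast_atTop_atTop
      exact (htend.eventually (eventually_lt_atBot z)).mono
        (fun n hn => lt_of_le_of_lt (min_le_right _ _) hn)
  · have hMbot : M ≠ ⊥ := hM.ne_bot
    have hnT : -M ≠ ⊤ := by simp [hMbot]
    have hnB : -M ≠ ⊥ := by simp [hMtop]
    set m : ℝ := (-M).toReal with hm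
    have hmeq : ((m : ℝ) : EReal) = -M := EReal.coe_toReal hnT hnB
    have hmx : m < x := by
      have := (hE ▸ hx).1
      rw [← hmeq] at this
      exact EReal.coe_lt_coe_iff.1 this
    have dpos : 0 < x - m := by linarith
    refine ⟨fun n => m + (x - m)/((n:ℝ)+2), ?_, ?_, ?_, ?_⟩
    · intro n k h
      have : (x - m)/((k:ℝ)+2) ≤ (x - m)/((n:ℝ)+2) := by
        apply div_le_div_of_nonneg_left dpos.le (by positivity)
        have : (n:ℝ) ≤ (k:ℝ) := Nat.cast_le.2 h
        linarith
      simp only []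
      linarith
    · intro n
      rw [hE]
      have h1 : m < m + (x - m)/((n:ℝ)+2) := by
        have := div_pos dpos (by positivity : (0:ℝ) < (n:ℝ)+2)
        linarith
      have h2 : m + (x - m)/((n:ℝ)+2) < x := by
        have h3 : (x - m)/((n:ℝ)+2) < x - m := div_lt_self dpos (by have := Nat.cast_nonneg (α := ℝ) n; linarith)
        linarith
      constructor
      · rw [← hmeq]
        exact EReal.coe_lt_coe_iff.2 h1
      · calc ((m + (x - m)/((n:ℝ)+2) : ℝ) : EReal) < (x : EReal) := EReal.coe_lt_coe_iff.2 h2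
          _ < N := (hE ▸ hx).2
    · intro n
      have h3 : (x - m)/((n:ℝ)+2) < x - m := div_lt_self dpos (by have := Nat.cast_nonneg (α := ℝ) n; linarith)
      linarith
    · intro z hz hzx
      have hmz : m < z := by
        have := (hE ▸ hz).1
        rw [← hmeq] at this
        exact EReal.coe_lt_coe_iff.1 this
      have hd : Tendsto (fun n : ℕ => ((n:ℝ)+2)) atTop atTop :=
        tendsto_atTop_add_const_right _ 2 tendsto_natCast_atTop_atTop
      have htend : Tendsto (fun n : ℕ => m + (x - m)/((n:ℝ)+2)) atTop (nhds m) := by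
        have h0 : Tendsto (fun n : ℕ => (x - m)/((n:ℝ)+2)) atTop (nhds 0) :=
          Tendsto.div_atTop tendsto_const_nhds hd
        simpa using tendsto_const_nhds.add h0
      exact htend.eventually_lt_const hmz

lemma exists_right_seq (M N : EReal) (hN : 0 < N) (E : Set ℝ)
    (hE : E = {x : ℝ | -M < (x : EReal) ∧ (x : EReal) < N}) (y : ℝ) (hy : y ∈ E) :
    ∃ s : ℕ → ℝ, Monotone s ∧ (∀ n, s n ∈ E) ∧ (∀ n, y < s n) ∧
      (∀ z ∈ E, y < z → ∀ᶠ n in atTop, z < s n) := by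
  by_cases hNtop : N = ⊤
  · refine ⟨fun n => max (y+1) (n:ℝ), ?_, ?_, ?_, ?_⟩
    · exact fun n m h => max_le_max le_rfl (Nat.cast_le.2 h)
    · intro n
      rw [hE]
      constructor
      · have h1 : y < max (y+1) (n:ℝ) := lt_of_lt_of_le (by linarith) (le_max_left _ _)
        calc -M < (y : EReal) := (hE ▸ hy).1
          _ < (max (y+1) (n:ℝ) : EReal) := EReal.coe_lt_coe_iff.2 h1
      · rw [hNtop]
        simp [EReal.coe_lt_top]
    · exact fun n => lt_of_lt_of_le (by linarith) (le_max_left _ _)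
    · intro z hz hzy
      have htend : Tendsto (fun n : ℕ => (n:ℝ)) atTop atTop := tendsto_natCast_atTop_atTop
      exact (htend.eventually (eventually_gt_atTop z)).mono
        (fun n hn => lt_of_lt_of_le hn (le_max_right _ _))
  · have hNbot : N ≠ ⊥ := hN.ne_bot
    set m : ℝ := N.toReal with hm
    have hmeq : ((m : ℝ) : EReal) = N := EReal.coe_toReal hNtop hNbot
    have hym : y < m := by
      have := (hE ▸ hy).2
      rw [← hmeq] at this
      exact EReal.coe_lt_coe_iff.1 this
    have dpos : 0 < m - y := by linarith
    refine ⟨fun n => m - (m - y)/((n:ℝ)+2), ?_, ?_, ?_, ?_⟩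
    · intro n k h
      have : (m - y)/((k:ℝ)+2) ≤ (m - y)/((n:ℝ)+2) := by
        apply div_le_div_of_nonneg_left dpos.le (by positivity)
        have : (n:ℝ) ≤ (k:ℝ) := Nat.cast_le.2 h
        linarith
      simp only []
      linarith
    · intro n
      rw [hE]
      have h1 : m - (m - y)/((n:ℝ)+2) < m := by
        have := div_pos dpos (by positivity : (0:ℝ) < (n:ℝ)+2)
        linarith
      have h2 : y < m - (m - y)/((n:ℝ)+2) := by
        have h3 : (m - y)/((n:ℝ)+2) < m - y := div_lt_self dpos (by have := Nat.cast_nonneg (α := ℝ) n; linarith)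
        linarith
      constructor
      · calc -M < (y : EReal) := (hE ▸ hy).1
          _ < _ := EReal.coe_lt_coe_iff.2 h2
      · rw [← hmeq]
        exact EReal.coe_lt_coe_iff.2 h1
    · intro n
      have h3 : (m - y)/((n:ℝ)+2) < m - y := div_lt_self dpos (by have := Nat.cast_nonneg (α := ℝ) n; linarith)
      linarith
    · intro z hz hzy
      have hmz : z < m := by
        have := (hE ▸ hz).2
        rw [← hmeq] at this
        exact EReal.coe_lt_coe_iff.1 this
      have hd : Tendsto (fun n : ℕ => ((n:ℝ)+2)) atTop atTop :=
        tendsto_atTop_add_const_right _ 2 tendsto_natCast_atTop_atTop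
      have htend : Tendsto (fun n : ℕ => m - (m - y)/((n:ℝ)+2)) atTop (nhds m) := by
        have h0 : Tendsto (fun n : ℕ => (m - y)/((n:ℝ)+2)) atTop (nhds 0) :=
          Tendsto.div_atTop tendsto_const_nhds hd
        simpa using tendsto_const_nhds.sub h0
      exact htend.eventually_const_lt hmz

lemma wd_inter_E {E : Set ℝ} (hEm : MeasurableSet E) (W : ℝ → ℝ≥0∞) {s : Set ℝ}
    (hs : MeasurableSet s) :
    ((volume.restrict E).withDensity W) s = ((volume.restrict E).withDensity W) (s ∩ E) := by
  rw [withDensity_apply _ hs, withDensity_apply _ (hs.inter hEm)]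
  rw [Measure.restrict_restrict hs, Measure.restrict_restrict (hs.inter hEm)]
  rw [inter_assoc, inter_self]

lemma wd_null {E : Set ℝ} (W : ℝ → ℝ≥0∞) {s : Set ℝ} (hs : MeasurableSet s)
    (hvol : volume (s ∩ E) = 0) :
    ((volume.restrict E).withDensity W) s = 0 := by
  rw [withDensity_apply _ hs]
  have : (volume.restrict E).restrict s = volume.restrict (s ∩ E) :=
    Measure.restrict_restrict hs
  rw [Measure.restrict_restrict hs, Measure.restrict_eq_zero.2 hvol, lintegral_zero_measure]

lemma wd_Ioo {E : Set ℝ} (hEm : MeasurableSet E) {W : ℝ → ℝ}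
    (hWc : ContinuousOn W E) (hW0 : ∀ z ∈ E, 0 ≤ W z)
    {p q : ℝ} (hIcc : Icc p q ⊆ E) (hpq : p ≤ q) :
    ((volume.restrict E).withDensity (fun z => ENNReal.ofReal (W z))) (Ioo p q)
      = ENNReal.ofReal (∫ z in p..q, W z) := by
  rw [withDensity_apply _ measurableSet_Ioo, Measure.restrict_restrict measurableSet_Ioo,
    inter_eq_self_of_subset_left (subset_trans Ioo_subset_Icc_self hIcc)]
  exact lint_ofReal_Ioo hpq (hWc.mono hIcc) (fun z hz => hW0 z (hIcc hz))

lemma wd_Ioo_pos {E : Set ℝ} (hEm : MeasurableSet E) {W : ℝ → ℝ}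
    (hWc : ContinuousOn W E) (hW0 : ∀ z ∈ E, 0 ≤ W z) (hWpos : ∀ z ∈ E, 0 < W z)
    {p q : ℝ} (hIcc : Icc p q ⊆ E) (hpq : p < q) :
    0 < ((volume.restrict E).withDensity (fun z => ENNReal.ofReal (W z))) (Ioo p q) := by
  rw [wd_Ioo hEm hWc hW0 hIcc hpq.le]
  refine ENNReal.ofReal_pos.2 ?_
  refine intervalIntegral.intervalIntegral_pos_of_pos_on ?_ ?_ hpq
  · exact (hWc.mono (by rwa [uIcc_of_le hpq.le])).intervalIntegrable
  · exact fun z hz => hWpos z (hIcc (Ioo_subset_Icc_self hz))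

lemma key_step
    (E : Set ℝ) (hEo : IsOpen E)
    (hconv : ∀ p ∈ E, ∀ q ∈ E, Icc p q ⊆ E)
    (C : ℝ → ℝ) (hCc : ContinuousOn C E)
    (x y p q : ℝ) (hx : x ∈ E) (hy : y ∈ E) (hp : p ∈ E) (hq : q ∈ E)
    (hpx : p < x) (hxy : x < y) (hyq : y < q)
    (δ : ℝ) (hδ : 0 < δ) (hδ4 : δ ≤ 1/4) :
    ∃ f : ℝ → ℝ, Differentiable ℝ f
      ∧ (∀ z, 0 ≤ f z) ∧ (∀ z, f z ≤ 1)
      ∧ (∀ z, z ∉ Icc p q → f z = 0)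
      ∧ (∀ z ∈ Icc x y, f z = 1)
      ∧ (∀ z ∈ Icc p x,
          (∫ w in p..z, Real.exp (-C w)) / (∫ w in p..x, Real.exp (-C w)) - 2*δ ≤ f z)
      ∧ (∀ z ∈ Icc y q,
          (∫ w in z..q, Real.exp (-C w)) / (∫ w in y..q, Real.exp (-C w)) - 2*δ ≤ f z)
      ∧ (∫⁻ z in E, ENNReal.ofReal ((deriv f z)^2 * Real.exp (C z)))
          ≤ ENNReal.ofReal ((1-2*δ)⁻¹ / (∫ w in p..x, Real.exp (-C w)))
            + ENNReal.ofReal ((1-2*δ)⁻¹ / (∫ w in y..q, Real.exp (-C w))) := by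
  classical
  set W : ℝ → ℝ := fun w => Real.exp (-C w) with hW
  have hW0 : ∀ z, 0 ≤ W z := fun z => (Real.exp_pos _).le
  have hWpos : ∀ z, 0 < W z := fun z => Real.exp_pos _
  have hWc : ContinuousOn W E := Real.continuous_exp.comp_continuousOn hCc.neg
  have hIpx : Icc p x ⊆ E := hconv p hp x hx
  have hIyq : Icc y q ⊆ E := hconv y hy q hq
  have hWint : ∀ z₁ z₂, z₁ ∈ E → z₂ ∈ E → IntervalIntegrable W volume z₁ z₂ := by
    intro z₁ z₂ h1 h2
    refine (hWc.mono ?_).intervalIntegrable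
    rcases le_total z₁ z₂ with h | h
    · rw [uIcc_of_le h]; exact hconv _ h1 _ h2
    · rw [uIcc_of_ge h]; exact hconv _ h2 _ h1
  set gl : ℝ → ℝ := fun z => ∫ w in p..z, W w with hgl
  set G : ℝ := gl x with hG
  set gr : ℝ → ℝ := fun z => ∫ w in z..q, W w with hgr
  set H : ℝ := gr y with hH
  have hGpos : 0 < G := by
    refine intervalIntegral.intervalIntegral_pos_of_pos_on (hWint p x hp hx) ?_ hpx
    exact fun z _ => hWpos z
  have hHpos : 0 < H := by
    refine intervalIntegral.intervalIntegral_pos_of_pos_on (hWint y q hy hq) ?_ hyq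
    exact fun z _ => hWpos z
  have hglder : ∀ z ∈ E, HasDerivAt gl (W z) z := by
    intro z hz
    exact intervalIntegral.integral_hasDerivAt_right (hWint p z hp hz)
      (hWc.stronglyMeasurableAtFilter hEo z hz) (hWc.continuousAt (hEo.mem_nhds hz))
  have hgr_eq : ∀ z, gr z = -∫ w in q..z, W w := by
    intro z
    rw [hgr]
    exact intervalIntegral.integral_symm q z
  have hgrder : ∀ z ∈ E, HasDerivAt gr (-(W z)) z := by
    intro z hz
    have h0 : HasDerivAt (fun t => ∫ w in q..t, W w) (W z) z :=
      intervalIntegral.integral_hasDerivAt_right (hWint q z hq hz)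
        (hWc.stronglyMeasurableAtFilter hEo z hz) (hWc.continuousAt (hEo.mem_nhds hz))
    have h1 : HasDerivAt (fun t => -∫ w in q..t, W w) (-(W z)) z := h0.neg
    exact h1.congr_of_eventuallyEq (Filter.Eventually.of_forall fun t => (hgr_eq t))
  set u : ℝ → ℝ := fun z => gl z / G with hu
  set v : ℝ → ℝ := fun z => gr z / H with hv
  have huder : ∀ z ∈ E, HasDerivAt u (W z / G) z := fun z hz => (hglder z hz).div_const G
  have hvder : ∀ z ∈ E, HasDerivAt v (-(W z) / H) z := fun z hz => (hgrder z hz).div_const H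
  have hup : u p = 0 := by
    simp only [hu, hgl, intervalIntegral.integral_same, zero_div]
  have hux : u x = 1 := div_self hGpos.ne'
  have hvy : v y = 1 := div_self hHpos.ne'
  have hvq : v q = 0 := by
    simp only [hv, hgr, intervalIntegral.integral_same, zero_div]
  have hglnonpos : ∀ z, z ≤ p → gl z ≤ 0 := by
    intro z hzp
    have h1 : 0 ≤ ∫ w in z..p, W w :=
      intervalIntegral.integral_nonneg hzp (fun w _ => hW0 w)
    have h2 : gl z = -∫ w in z..p, W w := intervalIntegral.integral_symm z p
    linarith
  have hgrnonpos : ∀ z, q ≤ z → gr z ≤ 0 := by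
    intro z hzq
    have h1 : 0 ≤ ∫ w in q..z, W w :=
      intervalIntegral.integral_nonneg hzq (fun w _ => hW0 w)
    have h2 := hgr_eq z
    linarith
  have hu01 : ∀ z ∈ Icc p x, 0 ≤ u z ∧ u z ≤ 1 := by
    intro z hz
    have hzE : z ∈ E := hIpx hz
    have h1 : 0 ≤ gl z := intervalIntegral.integral_nonneg hz.1 (fun w _ => hW0 w)
    have hadd : gl z + (∫ w in z..x, W w) = G :=
      intervalIntegral.integral_add_adjacent_intervals (hWint p z hp hzE) (hWint z x hzE hx)
    have h2 : 0 ≤ ∫ w in z..x, W w :=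
      intervalIntegral.integral_nonneg hz.2 (fun w _ => hW0 w)
    exact ⟨div_nonneg h1 hGpos.le, (div_le_one hGpos).2 (by linarith)⟩
  have hv01 : ∀ z ∈ Icc y q, 0 ≤ v z ∧ v z ≤ 1 := by
    intro z hz
    have hzE : z ∈ E := hIyq hz
    have h1 : 0 ≤ gr z := intervalIntegral.integral_nonneg hz.2 (fun w _ => hW0 w)
    have hadd : (∫ w in y..z, W w) + gr z = H :=
      intervalIntegral.integral_add_adjacent_intervals (hWint y z hy hzE) (hWint z q hzE hq)
    have h2 : 0 ≤ ∫ w in y..z, W w :=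
      intervalIntegral.integral_nonneg hz.1 (fun w _ => hW0 w)
    exact ⟨div_nonneg h1 hHpos.le, (div_le_one hHpos).2 (by linarith)⟩
  set f : ℝ → ℝ := fun z => if z < x then hfun δ (u z) else if z ≤ y then 1 else hfun δ (v z)
    with hf
  have hfIic : ∀ z, z ≤ x → f z = hfun δ (u z) := by
    intro z hz
    rcases lt_or_eq_of_le hz with h | h
    · simp only [hf, if_pos h]
    · subst h
      simp only [hf, lt_irrefl, if_false, if_pos hxy.le, hux, hfun_one hδ hδ4]
  have hfIci : ∀ z, y ≤ z → f z = hfun δ (v z) := by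
    intro z hz
    rcases lt_or_eq_of_le hz with h | h
    · have h1 : ¬ z < x := by linarith
      have h2 : ¬ z ≤ y := by linarith
      simp only [hf, if_neg h1, if_neg h2]
    · subst h
      have h1 : ¬ y < x := by linarith
      simp only [hf, if_neg h1, if_pos le_rfl, hvy, hfun_one hδ hδ4]
  have hfmid : ∀ z ∈ Icc x y, f z = 1 := by
    intro z hz
    simp only [hf, if_neg (not_lt.2 hz.1), if_pos hz.2]
  have hfzero : ∀ z, z ∉ Icc p q → f z = 0 := by
    intro z hz
    rw [mem_Icc, not_and_or] at hz
    rcases hz with h | h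
    · push_neg at h
      rw [hfIic z (by linarith)]
      refine hfun_zero_of_nonpos hδ ?_
      exact div_nonpos_iff.2 (Or.inr ⟨hglnonpos z h.le, hGpos.le⟩)
    · push_neg at h
      rw [hfIci z (by linarith)]
      refine hfun_zero_of_nonpos hδ ?_
      exact div_nonpos_iff.2 (Or.inr ⟨hgrnonpos z h.le, hHpos.le⟩)
  have hf0 : ∀ z, 0 ≤ f z := by
    intro z
    rcases le_or_gt z x with h1 | h1
    · rw [hfIic z h1]; exact hfun_nonneg hδ hδ4 _
    · rcases le_or_gt z y with h2 | h2
      · rw [hfmid z ⟨h1.le, h2⟩]; norm_num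
      · rw [hfIci z h2.le]; exact hfun_nonneg hδ hδ4 _
  have hf1 : ∀ z, f z ≤ 1 := by
    intro z
    rcases le_or_gt z x with h1 | h1
    · rw [hfIic z h1]; exact hfun_le_one hδ hδ4 _
    · rcases le_or_gt z y with h2 | h2
      · rw [hfmid z ⟨h1.le, h2⟩]
      · rw [hfIci z h2.le]; exact hfun_le_one hδ hδ4 _
  have hflb : ∀ z ∈ Icc p x, u z - 2*δ ≤ f z := by
    intro z hz
    rw [hfIic z hz.2]
    exact hfun_lb hδ hδ4 (hu01 z hz).2
  have hfrb : ∀ z ∈ Icc y q, v z - 2*δ ≤ f z := by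
    intro z hz
    rw [hfIci z hz.1]
    exact hfun_lb hδ hδ4 (hv01 z hz).2
  -- derivative
  set c : ℝ := (Imfun δ)⁻¹ with hc
  set f' : ℝ → ℝ := fun z => if p < z ∧ z < x then c * mfun δ (u z) * (W z / G)
      else if y < z ∧ z < q then c * mfun δ (v z) * (-(W z) / H) else 0 with hf'
  have hf'eqU : ∀ z, p < z → z < x → f' z = c * mfun δ (u z) * (W z / G) := by
    intro z h1 h2
    simp only [hf']
    rw [if_pos ⟨h1, h2⟩]
  have hf'eqV : ∀ z, y < z → z < q → f' z = c * mfun δ (v z) * (-(W z) / H) := by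
    intro z h1 h2
    simp only [hf']
    rw [if_neg (by rintro ⟨hh1, hh2⟩; linarith), if_pos ⟨h1, h2⟩]
  have hf'eq0 : ∀ z, z ∉ Ioo p x → z ∉ Ioo y q → f' z = 0 := by
    intro z h1 h2
    rw [mem_Ioo] at h1 h2
    simp only [hf']
    rw [if_neg h1, if_neg h2]
  have hcomp_u : ∀ z ∈ E, HasDerivAt (fun w => hfun δ (u w))
      (c * mfun δ (u z) * (W z / G)) z := by
    intro z hz
    exact (hfun_hasDerivAt δ (u z)).comp z (huder z hz)
  have hcomp_v : ∀ z ∈ E, HasDerivAt (fun w => hfun δ (v w))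
      (c * mfun δ (v z) * (-(W z) / H)) z := by
    intro z hz
    exact (hfun_hasDerivAt δ (v z)).comp z (hvder z hz)
  have hder : ∀ z, HasDerivAt f (f' z) z := by
    intro z
    rcases lt_trichotomy z p with hzp | hzp | hzp
    · -- z < p
      have hev : f =ᶠ[nhds z] (fun _ => (0:ℝ)) := by
        filter_upwards [Iio_mem_nhds hzp] with w hw
        exact hfzero w (fun hmem => absurd hmem.1 (not_le.2 hw))
      rw [hf'eq0 z (fun h => by exact absurd h.1 (by linarith)) (fun h => by
        have := h.1; have : y < z := this; linarith)]
      exact (hasDerivAt_const z (0:ℝ)).congr_of_eventuallyEq hev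
    · -- z = p
      subst hzp
      have hfp : f z = 0 := by
        rw [hfIic z hpx.le, hup, hfun_zero_of_nonpos hδ le_rfl]
      have hleft : HasDerivWithinAt f 0 (Iic z) z := by
        refine (hasDerivWithinAt_const z (Iic z) (0:ℝ)).congr ?_ hfp
        intro w hw
        rcases eq_or_lt_of_le (mem_Iic.1 hw) with h | h
        · subst h; exact hfp
        · exact hfzero w (fun hmem => absurd hmem.1 (not_le.2 h))
      have hright : HasDerivWithinAt f 0 (Ici z) z := by
        have h1 := hcomp_u z hp
        have h2 : c * mfun δ (u z) * (W z / G) = 0 := by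
          rw [hup, mfun_zero_left hδ le_rfl]; ring
        rw [h2] at h1
        refine (h1.hasDerivWithinAt).congr_of_eventuallyEq ?_ ?_
        · filter_upwards [nhdsWithin_le_nhds (Iio_mem_nhds hpx)] with w hw
          exact hfIic w hw.le
        · rw [hfIic z hpx.le]
      have h3 := hleft.union hright
      rw [Iic_union_Ici] at h3
      rw [hf'eq0 z (fun h => absurd h.1 (lt_irrefl z)) (fun h => by
        have : y < z := h.1; linarith)]
      exact hasDerivWithinAt_univ.1 h3
    · rcases lt_trichotomy z x with hzx | hzx | hzx
      · -- p < z < x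
        have hev : f =ᶠ[nhds z] (fun w => hfun δ (u w)) := by
          filter_upwards [Iio_mem_nhds hzx] with w hw
          exact hfIic w hw.le
        rw [hf'eqU z hzp hzx]
        exact (hcomp_u z (hIpx ⟨hzp.le, hzx.le⟩)).congr_of_eventuallyEq hev
      · -- z = x
        subst hzx
        have hleft : HasDerivWithinAt f 0 (Iic z) z := by
          have h1 := hcomp_u z hx
          have h2 : c * mfun δ (u z) * (W z / G) = 0 := by
            rw [hux, mfun_zero_right hδ le_rfl]; ring
          rw [h2] at h1
          refine (h1.hasDerivWithinAt).congr ?_ (hfIic z le_rfl)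
          exact fun w hw => hfIic w hw
        have hright : HasDerivWithinAt f 0 (Ici z) z := by
          refine (hasDerivWithinAt_const z (Ici z) (1:ℝ)).congr_of_eventuallyEq ?_
            (hfmid z ⟨le_rfl, hxy.le⟩)
          filter_upwards [nhdsWithin_le_nhds (Iio_mem_nhds hxy), self_mem_nhdsWithin]
            with w hw1 hw2
          exact hfmid w ⟨hw2, hw1.le⟩
        have h3 := hleft.union hright
        rw [Iic_union_Ici] at h3
        rw [hf'eq0 z (fun h => absurd h.2 (lt_irrefl z)) (fun h => by
          have : y < z := h.1; linarith)]
        exact hasDerivWithinAt_univ.1 h3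
      · rcases lt_trichotomy z y with hzy | hzy | hzy
        · -- x < z < y
          have hev : f =ᶠ[nhds z] (fun _ => (1:ℝ)) := by
            filter_upwards [Ioo_mem_nhds hzx hzy] with w hw
            exact hfmid w ⟨hw.1.le, hw.2.le⟩
          rw [hf'eq0 z (fun h => absurd h.2 (by linarith)) (fun h => by
            have : y < z := h.1; linarith)]
          exact (hasDerivAt_const z (1:ℝ)).congr_of_eventuallyEq hev
        · -- z = y
          subst hzy
          have hleft : HasDerivWithinAt f 0 (Iic z) z := by
            refine (hasDerivWithinAt_const z (Iic z) (1:ℝ)).congr_of_eventuallyEq ?_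
              (hfmid z ⟨hxy.le, le_rfl⟩)
            filter_upwards [nhdsWithin_le_nhds (Ioi_mem_nhds hxy), self_mem_nhdsWithin]
              with w hw1 hw2
            exact hfmid w ⟨hw1.le, hw2⟩
          have hright : HasDerivWithinAt f 0 (Ici z) z := by
            have h1 := hcomp_v z hy
            have h2 : c * mfun δ (v z) * (-(W z) / H) = 0 := by
              rw [hvy, mfun_zero_right hδ le_rfl]; ring
            rw [h2] at h1
            refine (h1.hasDerivWithinAt).congr ?_ (hfIci z le_rfl)
            exact fun w hw => hfIci w hw
          have h3 := hleft.union hright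
          rw [Iic_union_Ici] at h3
          rw [hf'eq0 z (fun h => absurd h.2 (by linarith)) (fun h => absurd h.1 (lt_irrefl z))]
          exact hasDerivWithinAt_univ.1 h3
        · rcases lt_trichotomy z q with hzq | hzq | hzq
          · -- y < z < q
            have hev : f =ᶠ[nhds z] (fun w => hfun δ (v w)) := by
              filter_upwards [Ioi_mem_nhds hzy] with w hw
              exact hfIci w hw.le
            have hne : z ∉ Ioo p x := fun h => absurd h.2 (by linarith)
            rw [hf'eqV z hzy hzq]
            exact (hcomp_v z (hIyq ⟨hzy.le, hzq.le⟩)).congr_of_eventuallyEq hev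
          · -- z = q
            subst hzq
            have hfq : f z = 0 := by
              rw [hfIci z hyq.le, hvq, hfun_zero_of_nonpos hδ le_rfl]
            have hleft : HasDerivWithinAt f 0 (Iic z) z := by
              have h1 := hcomp_v z hq
              have h2 : c * mfun δ (v z) * (-(W z) / H) = 0 := by
                rw [hvq, mfun_zero_left hδ le_rfl]; ring
              rw [h2] at h1
              refine (h1.hasDerivWithinAt).congr_of_eventuallyEq ?_ (hfIci z hyq.le)
              filter_upwards [nhdsWithin_le_nhds (Ioi_mem_nhds hyq)] with w hw
              exact hfIci w hw.le
            have hright : HasDerivWithinAt f 0 (Ici z) z := by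
              refine (hasDerivWithinAt_const z (Ici z) (0:ℝ)).congr ?_ hfq
              intro w hw
              rcases eq_or_lt_of_le (mem_Ici.1 hw) with h | h
              · rw [← h]; exact hfq
              · exact hfzero w (fun hmem => absurd hmem.2 (not_le.2 h))
            have h3 := hleft.union hright
            rw [Iic_union_Ici] at h3
            rw [hf'eq0 z (fun h => absurd h.2 (by linarith)) (fun h => absurd h.2 (lt_irrefl z))]
            exact hasDerivWithinAt_univ.1 h3
          · -- q < z
            have hev : f =ᶠ[nhds z] (fun _ => (0:ℝ)) := by
              filter_upwards [Ioi_mem_nhds hzq] with w hw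
              exact hfzero w (fun hmem => absurd hmem.2 (not_le.2 hw))
            rw [hf'eq0 z (fun h => absurd h.2 (by linarith)) (fun h => absurd h.2 (by linarith))]
            exact (hasDerivAt_const z (0:ℝ)).congr_of_eventuallyEq hev
  have hdiff : Differentiable ℝ f := fun z => (hder z).differentiableAt
  have hderiv_eq : ∀ z, deriv f z = f' z := fun z => (hder z).deriv
  -- the D bound
  have hDbound : (∫⁻ z in E, ENNReal.ofReal ((deriv f z)^2 * Real.exp (C z)))
      ≤ ENNReal.ofReal ((1-2*δ)⁻¹ / G) + ENNReal.ofReal ((1-2*δ)⁻¹ / H) := by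
    have hpoint : ∀ z, ENNReal.ofReal ((deriv f z)^2 * Real.exp (C z))
        = (Ioo p x ∪ Ioo y q).indicator
            (fun w => ENNReal.ofReal ((f' w)^2 * Real.exp (C w))) z := by
      intro z
      rw [hderiv_eq z]
      by_cases hz : z ∈ Ioo p x ∪ Ioo y q
      · rw [indicator_of_mem hz]
      · rw [indicator_of_notMem hz,
          hf'eq0 z (fun h => hz (Or.inl h)) (fun h => hz (Or.inr h))]
        simp
    have hdisj : Disjoint (Ioo p x) (Ioo y q) := by
      rw [Set.disjoint_left]
      intro z h1 h2
      have := h1.2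
      have := h2.1
      linarith
    have hsplit : (∫⁻ z in E, ENNReal.ofReal ((deriv f z)^2 * Real.exp (C z)))
        ≤ (∫⁻ z in Ioo p x, ENNReal.ofReal ((f' z)^2 * Real.exp (C z)))
          + (∫⁻ z in Ioo y q, ENNReal.ofReal ((f' z)^2 * Real.exp (C z))) := by
      calc ∫⁻ z in E, ENNReal.ofReal ((deriv f z)^2 * Real.exp (C z))
          ≤ ∫⁻ z, ENNReal.ofReal ((deriv f z)^2 * Real.exp (C z)) :=
            setLIntegral_le_lintegral _ _
        _ = ∫⁻ z, (Ioo p x ∪ Ioo y q).indicator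
              (fun w => ENNReal.ofReal ((f' w)^2 * Real.exp (C w))) z :=
            lintegral_congr hpoint
        _ = ∫⁻ z in Ioo p x ∪ Ioo y q, ENNReal.ofReal ((f' z)^2 * Real.exp (C z)) :=
            lintegral_indicator (measurableSet_Ioo.union measurableSet_Ioo) _
        _ = _ := lintegral_union measurableSet_Ioo hdisj
    have hucont : ContinuousOn u (Icc p x) :=
      fun z hz => ((huder z (hIpx hz)).continuousAt).continuousWithinAt
    have hvcont : ContinuousOn v (Icc y q) :=
      fun z hz => ((hvder z (hIyq hz)).continuousAt).continuousWithinAt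
    have hECcont : ContinuousOn (fun z => Real.exp (C z)) E :=
      Real.continuous_exp.comp_continuousOn hCc
    have hWeC : ∀ z, W z * Real.exp (C z) = 1 := by
      intro z
      simp only [hW, ← Real.exp_add]
      simp
    have hsq := hfun_deriv_sq_integral hδ hδ4
    rw [← hc] at hsq
    have hleftD : (∫⁻ z in Ioo p x, ENNReal.ofReal ((f' z)^2 * Real.exp (C z)))
        ≤ ENNReal.ofReal ((1-2*δ)⁻¹ / G) := by
      set F : ℝ → ℝ := fun z => (c * mfun δ (u z) * (W z / G))^2 * Real.exp (C z) with hF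
      have hcong : (∫⁻ z in Ioo p x, ENNReal.ofReal ((f' z)^2 * Real.exp (C z)))
          = ∫⁻ z in Ioo p x, ENNReal.ofReal (F z) := by
        refine setLIntegral_congr_fun measurableSet_Ioo (fun z hz => ?_)
        rw [hf'eqU z hz.1 hz.2]
      have hFc : ContinuousOn F (Icc p x) := by
        refine ContinuousOn.mul ?_ (hECcont.mono hIpx)
        refine ContinuousOn.pow ?_ 2
        refine ContinuousOn.mul ?_ ((hWc.mono hIpx).div_const G)
        exact continuousOn_const.mul ((mfun_cont δ).comp_continuousOn hucont)
      have hF0 : ∀ z ∈ Icc p x, 0 ≤ F z := by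
        intro z hz
        simp only [hF]
        positivity
      rw [hcong, lint_ofReal_Ioo hpx.le hFc hF0]
      refine ENNReal.ofReal_le_ofReal ?_
      set g0 : ℝ → ℝ := fun w => (1/G) * (c * mfun δ w)^2 with hg0
      have hFrw : EqOn F (fun z => (W z / G) • g0 (u z)) (uIcc p x) := by
        intro z hz
        have h1 : F z = (W z * Real.exp (C z)) * ((W z / G) * g0 (u z)) := by
          simp only [hF, hg0]
          ring
        show F z = (W z / G) • g0 (u z)
        rw [smul_eq_mul, h1, hWeC z, one_mul]
      have hderivall : ∀ z ∈ uIcc p x, HasDerivAt u (W z / G) z := by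
        rw [uIcc_of_le hpx.le]
        exact fun z hz => huder z (hIpx hz)
      have hcontf' : ContinuousOn (fun z => W z / G) (uIcc p x) := by
        rw [uIcc_of_le hpx.le]
        exact (hWc.mono hIpx).div_const G
      have hg0cont : Continuous g0 := by
        simp only [hg0]
        have := mfun_cont δ
        fun_prop
      have hcv := intervalIntegral.integral_comp_smul_deriv hderivall hcontf' hg0cont
      rw [hup, hux] at hcv
      have e1 : ∫ z in p..x, F z = ∫ w in (0:ℝ)..1, g0 w :=
        (intervalIntegral.integral_congr hFrw).trans hcv
      rw [e1]
      have e2 : ∫ w in (0:ℝ)..1, g0 w = (1/G) * ∫ w in (0:ℝ)..1, (c * mfun δ w)^2 := by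
        simp only [hg0]
        exact intervalIntegral.integral_const_mul _ _
      rw [e2]
      calc (1/G) * ∫ w in (0:ℝ)..1, (c * mfun δ w)^2
          ≤ (1/G) * (1-2*δ)⁻¹ := by
            refine mul_le_mul_of_nonneg_left ?_ (by positivity)
            exact hsq
        _ = (1-2*δ)⁻¹ / G := by ring
    have hrightD : (∫⁻ z in Ioo y q, ENNReal.ofReal ((f' z)^2 * Real.exp (C z)))
        ≤ ENNReal.ofReal ((1-2*δ)⁻¹ / H) := by
      set F : ℝ → ℝ := fun z => (c * mfun δ (v z) * (-(W z) / H))^2 * Real.exp (C z) with hF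
      have hcong : (∫⁻ z in Ioo y q, ENNReal.ofReal ((f' z)^2 * Real.exp (C z)))
          = ∫⁻ z in Ioo y q, ENNReal.ofReal (F z) := by
        refine setLIntegral_congr_fun measurableSet_Ioo (fun z hz => ?_)
        rw [hf'eqV z hz.1 hz.2]
      have hFc : ContinuousOn F (Icc y q) := by
        refine ContinuousOn.mul ?_ (hECcont.mono hIyq)
        refine ContinuousOn.pow ?_ 2
        refine ContinuousOn.mul ?_ (((hWc.mono hIyq).neg).div_const H)
        exact continuousOn_const.mul ((mfun_cont δ).comp_continuousOn hvcont)
      have hF0 : ∀ z ∈ Icc y q, 0 ≤ F z := by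
        intro z hz
        simp only [hF]
        positivity
      rw [hcong, lint_ofReal_Ioo hyq.le hFc hF0]
      refine ENNReal.ofReal_le_ofReal ?_
      set g1 : ℝ → ℝ := fun w => -((1/H) * (c * mfun δ w)^2) with hg1
      have hFrw : EqOn F (fun z => (-(W z) / H) • g1 (v z)) (uIcc y q) := by
        intro z hz
        have h1 : F z = (W z * Real.exp (C z)) * ((-(W z) / H) * g1 (v z)) := by
          simp only [hF, hg1]
          ring
        show F z = (-(W z) / H) • g1 (v z)
        rw [smul_eq_mul, h1, hWeC z, one_mul]
      have hderivall : ∀ z ∈ uIcc y q, HasDerivAt v (-(W z) / H) z := by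
        rw [uIcc_of_le hyq.le]
        exact fun z hz => hvder z (hIyq hz)
      have hcontf' : ContinuousOn (fun z => -(W z) / H) (uIcc y q) := by
        rw [uIcc_of_le hyq.le]
        exact ((hWc.mono hIyq).neg).div_const H
      have hg1cont : Continuous g1 := by
        simp only [hg1]
        have := mfun_cont δ
        fun_prop
      have hcv := intervalIntegral.integral_comp_smul_deriv hderivall hcontf' hg1cont
      rw [hvy, hvq] at hcv
      have e1 : ∫ z in y..q, F z = ∫ w in (1:ℝ)..0, g1 w :=
        (intervalIntegral.integral_congr hFrw).trans hcv
      rw [e1]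
      have e2 : ∫ w in (1:ℝ)..0, g1 w = (1/H) * ∫ w in (0:ℝ)..1, (c * mfun δ w)^2 := by
        rw [intervalIntegral.integral_symm]
        simp only [hg1]
        rw [intervalIntegral.integral_neg, neg_neg]
        exact intervalIntegral.integral_const_mul _ _
      rw [e2]
      calc (1/H) * ∫ w in (0:ℝ)..1, (c * mfun δ w)^2
          ≤ (1/H) * (1-2*δ)⁻¹ := by
            refine mul_le_mul_of_nonneg_left ?_ (by positivity)
            exact hsq
        _ = (1-2*δ)⁻¹ / H := by ring
    exact le_trans hsplit (add_le_add hleftD hrightD)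
  exact ⟨f, hdiff, hf0, hf1, hfzero, hfmid, hflb, hfrb, hDbound⟩

/-- Improved upper bound, DD-case (Proposition 3.2):
`λ^DD ≤ (κ̄^DD)⁻¹ ≤ (κ^DD)⁻¹`. -/
theorem improved_upper_bound_DD
    (M N : EReal) (hM : 0 < M) (hN : 0 < N)
    (E : Set ℝ) (hE : E = {x : ℝ | -M < (x : EReal) ∧ (x : EReal) < N})
    (a b : ℝ → ℝ)
    (ha : ContinuousOn a E) (hb : ContinuousOn b E)
    (hapos : ∀ x ∈ E, 0 < a x)
    (θ₀ : ℝ) (hθ₀ : θ₀ ∈ E)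
    (C : ℝ → ℝ) (hC : ∀ x, C x = ∫ t in θ₀..x, b t / a t)
    (μ ν : Measure ℝ)
    (hμ : μ = (volume.restrict E).withDensity fun x => ENNReal.ofReal (Real.exp (C x) / a x))
    (hν : ν = (volume.restrict E).withDensity fun x => ENNReal.ofReal (Real.exp (-C x)))
    -- μ and ν are locally finite on E
    (hμloc : ∀ x ∈ E, ∃ s ∈ nhds x, μ s < ⊤)
    (hνloc : ∀ x ∈ E, ∃ s ∈ nhds x, ν s < ⊤)
    (lam : ℝ≥0∞)
    -- λ^DD : infimum of D(f) over absolutely continuous f with compact support in E,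
    -- ∫ f² dμ = 1
    (hlam : lam = ⨅ (f : ℝ → ℝ) (_ : DifferentiableOn ℝ f E) (_ : HasCompactSupport f)
        (_ : tsupport f ⊆ E) (_ : ∫⁻ x, ENNReal.ofReal ((f x) ^ 2) ∂μ = 1),
        ∫⁻ x in E, ENNReal.ofReal ((deriv f x) ^ 2 * Real.exp (C x)))
    (kapInv : ℝ≥0∞)
    -- (κ^DD)⁻¹ = inf_{x<y} [ν((-M,x))⁻¹ + ν((y,N))⁻¹] μ((x,y))⁻¹
    (hkap : kapInv = ⨅ (x : ℝ) (_ : x ∈ E) (y : ℝ) (_ : y ∈ E) (_ : x < y),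
        ((ν (Iio x))⁻¹ + (ν (Ioi y))⁻¹) * (μ (Ioo x y))⁻¹)
    (kbarInv : ℝ≥0∞)
    -- (κ̄^DD)⁻¹ = inf_{-M<x<y<N} (ν((-M,x))⁻¹ + ν([y,N))⁻¹) ⋅
    --   { μ((x,y)) + ∫_{(-M,x)} [1 - ν((z,x))/ν((-M,x))]² μ(dz)
    --             + ∫_{(y,N)} [1 - ν((y,z))/ν((y,N))]² μ(dz) }⁻¹
    -- (ratios with infinite denominator are 0, via ENNReal.toReal)
    (hkbar : kbarInv = ⨅ (x : ℝ) (_ : x ∈ E) (y : ℝ) (_ : y ∈ E) (_ : x < y),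
        ((ν (Iio x))⁻¹ + (ν (Ici y))⁻¹) *
        (μ (Ioo x y)
          + (∫⁻ z in Iio x, ENNReal.ofReal ((1 - (ν (Ioo z x)).toReal / (ν (Iio x)).toReal) ^ 2) ∂μ)
          + (∫⁻ z in Ioi y, ENNReal.ofReal ((1 - (ν (Ioo y z)).toReal / (ν (Ioi y)).toReal) ^ 2) ∂μ))⁻¹) :
    lam ≤ kbarInv ∧ kbarInv ≤ kapInv := by
  have hEo : IsOpen E := by rw [hE]; exact isOpen_Eset M N
  have hEm : MeasurableSet E := hEo.measurableSet
  have hconv : ∀ p ∈ E, ∀ q ∈ E, Icc p q ⊆ E := fun p hp q hq => Eset_conv hE hp hq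
  have hba : ContinuousOn (fun t => b t / a t) E := hb.div ha (fun t ht => (hapos t ht).ne')
  have hCd : ∀ w ∈ E, HasDerivAt C (b w / a w) w := by
    intro w hw
    have hCfun : C = fun z => ∫ t in θ₀..z, b t / a t := funext hC
    rw [hCfun]
    have huIcc : uIcc θ₀ w ⊆ E := by
      rcases le_total θ₀ w with h | h
      · rw [uIcc_of_le h]; exact hconv _ hθ₀ _ hw
      · rw [uIcc_of_ge h]; exact hconv _ hw _ hθ₀
    exact intervalIntegral.integral_hasDerivAt_right ((hba.mono huIcc).intervalIntegrable)
      (hba.stronglyMeasurableAtFilter hEo w hw) (hba.continuousAt (hEo.mem_nhds hw))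
  have hCc : ContinuousOn C E := fun w hw => ((hCd w hw).continuousAt).continuousWithinAt
  have hWνc : ContinuousOn (fun z => Real.exp (-C z)) E :=
    Real.continuous_exp.comp_continuousOn hCc.neg
  have hWν0 : ∀ z ∈ E, 0 ≤ Real.exp (-C z) := fun z _ => (Real.exp_pos _).le
  have hWνpos : ∀ z ∈ E, 0 < Real.exp (-C z) := fun z _ => Real.exp_pos _
  have hWμc : ContinuousOn (fun z => Real.exp (C z) / a z) E :=
    (Real.continuous_exp.comp_continuousOn hCc).div ha (fun t ht => (hapos t ht).ne')
  have hWμ0 : ∀ z ∈ E, 0 ≤ Real.exp (C z) / a z :=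
    fun z hz => le_of_lt (div_pos (Real.exp_pos _) (hapos z hz))
  have hWμpos : ∀ z ∈ E, 0 < Real.exp (C z) / a z :=
    fun z hz => div_pos (Real.exp_pos _) (hapos z hz)
  have hνIoo : ∀ p q : ℝ, p ∈ E → q ∈ E → p ≤ q →
      ν (Ioo p q) = ENNReal.ofReal (∫ z in p..q, Real.exp (-C z)) := by
    intro p q hp hq hpq
    rw [hν]
    exact wd_Ioo hEm hWνc hWν0 (hconv _ hp _ hq) hpq
  have hνpos : ∀ p q : ℝ, p ∈ E → q ∈ E → p < q → 0 < ν (Ioo p q) := by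
    intro p q hp hq hpq
    rw [hν]
    exact wd_Ioo_pos hEm hWνc hWν0 hWνpos (hconv _ hp _ hq) hpq
  have hν_inter : ∀ s, MeasurableSet s → ν s = ν (s ∩ E) := by
    intro s hs
    rw [hν]
    exact wd_inter_E hEm _ hs
  have hν_single : ∀ w : ℝ, ν {w} = 0 := by
    intro w
    rw [hν]
    exact wd_null _ (measurableSet_singleton w)
      (measure_mono_null inter_subset_left (Real.volume_singleton))
  have hμ_single : ∀ w : ℝ, μ {w} = 0 := by
    intro w
    rw [hμ]
    exact wd_null _ (measurableSet_singleton w)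
      (measure_mono_null inter_subset_left (Real.volume_singleton))
  have hμ_compl : μ Eᶜ = 0 := by
    rw [hμ]
    refine wd_null _ hEm.compl ?_
    rw [compl_inter_self]
    exact measure_empty
  constructor
  · -- main part : lam ≤ kbarInv
    rw [hkbar]
    refine le_iInf fun x => le_iInf fun hx => le_iInf fun y => le_iInf fun hy =>
      le_iInf fun hxy => ?_
    obtain ⟨t, ht_anti, htE, htlt, htcof⟩ := exists_left_seq M N hM E hE x hx
    obtain ⟨s, hs_mono, hsE, hsgt, hscof⟩ := exists_right_seq M N hN E hE y hy
    set L := ∫⁻ z in Iio x,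
        ENNReal.ofReal ((1 - (ν (Ioo z x)).toReal / (ν (Iio x)).toReal) ^ 2) ∂μ with hL
    set R := ∫⁻ z in Ioi y,
        ENNReal.ofReal ((1 - (ν (Ioo y z)).toReal / (ν (Ioi y)).toReal) ^ 2) ∂μ with hR
    set Den := μ (Ioo x y) + L + R with hDen
    set Afac := (ν (Iio x))⁻¹ + (ν (Ici y))⁻¹ with hAfac
    have hμxy_pos : 0 < μ (Ioo x y) := by
      rw [hμ]
      exact wd_Ioo_pos hEm hWμc hWμ0 hWμpos (hconv _ hx _ hy) hxy
    have hν1pos : 0 < ν (Iio x) :=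
      lt_of_lt_of_le (hνpos (t 0) x (htE 0) hx (htlt 0)) (measure_mono Ioo_subset_Iio_self)
    have hν2pos : 0 < ν (Ioi y) :=
      lt_of_lt_of_le (hνpos y (s 0) hy (hsE 0) (hsgt 0)) (measure_mono Ioo_subset_Ioi_self)
    have hIci_eq : ν (Ici y) = ν (Ioi y) := by
      have h1 : Ici y = {y} ∪ Ioi y := by
        ext z
        simp only [mem_Ici, mem_union, mem_singleton_iff, mem_Ioi]
        constructor
        · intro h
          rcases eq_or_lt_of_le h with h' | h'
          · exact Or.inl h'.symm
          · exact Or.inr h'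
        · rintro (h | h)
          · exact h.ge
          · exact h.le
      rw [h1]
      refine le_antisymm (le_trans (measure_union_le _ _) ?_) (measure_mono subset_union_right)
      rw [hν_single y, zero_add]
    have hν3pos : 0 < ν (Ici y) := by rw [hIci_eq]; exact hν2pos
    have hAfac_ne_top : Afac ≠ ⊤ := by
      rw [hAfac]
      exact ENNReal.add_ne_top.2 ⟨ENNReal.inv_ne_top.2 hν1pos.ne', ENNReal.inv_ne_top.2 hν3pos.ne'⟩
    have hDen0 : Den ≠ 0 := by
      rw [hDen]
      exact (lt_of_lt_of_le hμxy_pos (le_self_add.trans le_self_add)).ne'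
    suffices hsuf : lam * Den ≤ Afac by
      rw [← div_eq_mul_inv]
      exact (ENNReal.le_div_iff_mul_le (Or.inl hDen0) (Or.inr hAfac_ne_top)).2 hsuf
    -- smoothing parameters
    set δs : ℕ → ℝ := fun n => ((n:ℝ)+5)⁻¹ with hδs
    have hδpos : ∀ n, 0 < δs n := fun n => by positivity
    have hδ4 : ∀ n, δs n ≤ 1/4 := by
      intro n
      rw [hδs]
      have h1 : (4:ℝ) ≤ (n:ℝ)+5 := by
        have := Nat.cast_nonneg (α := ℝ) n
        linarith
      have h2 : ((n:ℝ)+5)⁻¹ ≤ (4:ℝ)⁻¹ := by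
        apply inv_anti₀ (by norm_num) h1
      calc ((n:ℝ)+5)⁻¹ ≤ (4:ℝ)⁻¹ := h2
        _ ≤ 1/4 := by norm_num
    have hδ0 : Tendsto δs atTop (nhds 0) := by
      have h1 : Tendsto (fun n : ℕ => ((n:ℝ)+5)) atTop atTop :=
        tendsto_atTop_add_const_right _ 5 tendsto_natCast_atTop_atTop
      exact tendsto_inv_atTop_zero.comp h1
    have hcoef : Tendsto (fun n => (1 - 2*δs n)⁻¹) atTop (nhds 1) := by
      have h1 : Tendsto (fun n => 1 - 2*δs n) atTop (nhds 1) := by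
        have h2 := (tendsto_const_nhds (α := ℕ) (x := (1:ℝ)) (f := atTop)).sub
          (hδ0.const_mul 2)
        simpa using h2
      have h3 := h1.inv₀ (by norm_num)
      simpa using h3
    -- test functions
    have hkey := fun n => key_step E hEo hconv C hCc x y (t n) (s n) hx hy (htE n) (hsE n)
      (htlt n) hxy (hsgt n) (δs n) (hδpos n) (hδ4 n)
    choose f hfdiff hf0 hf1 hfzero hfmid hflb hfrb hfD using hkey
    set Gr : ℕ → ℝ := fun n => ∫ w in (t n)..x, Real.exp (-C w) with hGrdef
    set Hr : ℕ → ℝ := fun n => ∫ w in y..(s n), Real.exp (-C w) with hHrdef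
    have hGrν : ∀ n, ν (Ioo (t n) x) = ENNReal.ofReal (Gr n) :=
      fun n => hνIoo _ _ (htE n) hx (htlt n).le
    have hHrν : ∀ n, ν (Ioo y (s n)) = ENNReal.ofReal (Hr n) :=
      fun n => hνIoo _ _ hy (hsE n) (hsgt n).le
    have hGr0 : ∀ n, 0 ≤ Gr n :=
      fun n => intervalIntegral.integral_nonneg (htlt n).le (fun w _ => (Real.exp_pos _).le)
    have hHr0 : ∀ n, 0 ≤ Hr n :=
      fun n => intervalIntegral.integral_nonneg (hsgt n).le (fun w _ => (Real.exp_pos _).le)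
    have hGr_toReal : ∀ n, (ν (Ioo (t n) x)).toReal = Gr n := by
      intro n
      rw [hGrν n, ENNReal.toReal_ofReal (hGr0 n)]
    have hHr_toReal : ∀ n, (ν (Ioo y (s n))).toReal = Hr n := by
      intro n
      rw [hHrν n, ENNReal.toReal_ofReal (hHr0 n)]
    have hGrfin : ∀ n, ν (Ioo (t n) x) ≠ ⊤ := fun n => by
      rw [hGrν n]; exact ENNReal.ofReal_ne_top
    have hHrfin : ∀ n, ν (Ioo y (s n)) ≠ ⊤ := fun n => by
      rw [hHrν n]; exact ENNReal.ofReal_ne_top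
    have hmonoL : Monotone (fun n => Ioo (t n) x) :=
      fun n m h => Ioo_subset_Ioo_left (ht_anti h)
    have hmonoR : Monotone (fun n => Ioo y (s n)) :=
      fun n m h => Ioo_subset_Ioo_right (hs_mono h)
    have hunionL : (⋃ n, Ioo (t n) x) = Iio x ∩ E := by
      ext z
      simp only [mem_iUnion, mem_Ioo, mem_inter_iff, mem_Iio]
      constructor
      · rintro ⟨n, h1, h2⟩
        exact ⟨h2, hconv _ (htE n) _ hx ⟨h1.le, h2.le⟩⟩
      · rintro ⟨h1, h2⟩
        obtain ⟨n, hn⟩ := (htcof z h2 h1).exists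
        exact ⟨n, hn, h1⟩
    have hunionR : (⋃ n, Ioo y (s n)) = Ioi y ∩ E := by
      ext z
      simp only [mem_iUnion, mem_Ioo, mem_inter_iff, mem_Ioi]
      constructor
      · rintro ⟨n, h1, h2⟩
        exact ⟨h1, hconv _ hy _ (hsE n) ⟨h1.le, h2.le⟩⟩
      · rintro ⟨h1, h2⟩
        obtain ⟨n, hn⟩ := (hscof z h2 h1).exists
        exact ⟨n, h1, hn⟩
    have htendL : Tendsto (fun n => ν (Ioo (t n) x)) atTop (nhds (ν (Iio x))) := by
      have h1 := tendsto_measure_iUnion_atTop (μ := ν) hmonoL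
      rw [hunionL] at h1
      rw [hν_inter _ measurableSet_Iio]
      exact h1
    have htendR : Tendsto (fun n => ν (Ioo y (s n))) atTop (nhds (ν (Ioi y))) := by
      have h1 := tendsto_measure_iUnion_atTop (μ := ν) hmonoR
      rw [hunionR] at h1
      rw [hν_inter _ measurableSet_Ioi]
      exact h1
    have hDseqL : Tendsto (fun n => ENNReal.ofReal ((1-2*δs n)⁻¹ / Gr n)) atTop
        (nhds (ν (Iio x))⁻¹) := by
      have h1 := tendsto_ofReal_div_toReal (fun n => ν (Ioo (t n) x)) (ν (Iio x))
        (fun n => (1-2*δs n)⁻¹) hGrfin hν1pos.ne' htendL hcoef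
      exact h1.congr fun n => by rw [hGr_toReal n]
    have hDseqR : Tendsto (fun n => ENNReal.ofReal ((1-2*δs n)⁻¹ / Hr n)) atTop
        (nhds (ν (Ioi y))⁻¹) := by
      have h1 := tendsto_ofReal_div_toReal (fun n => ν (Ioo y (s n))) (ν (Ioi y))
        (fun n => (1-2*δs n)⁻¹) hHrfin hν2pos.ne' htendR hcoef
      exact h1.congr fun n => by rw [hHr_toReal n]
    have hDbound_t : Tendsto (fun n => ENNReal.ofReal ((1-2*δs n)⁻¹ / Gr n)
        + ENNReal.ofReal ((1-2*δs n)⁻¹ / Hr n)) atTop (nhds Afac) := by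
      rw [hAfac, hIci_eq]
      exact hDseqL.add hDseqR
    -- the L² masses
    set P : ℕ → ℝ≥0∞ := fun n => ∫⁻ z, ENNReal.ofReal ((f n z)^2) ∂μ with hPdef
    have hPn_fin : ∀ n, P n ≠ ⊤ := by
      intro n
      have hb1 : ∀ z, ENNReal.ofReal ((f n z)^2)
          ≤ (Icc (t n) (s n)).indicator (fun _ => (1:ℝ≥0∞)) z := by
        intro z
        by_cases hz : z ∈ Icc (t n) (s n)
        · rw [indicator_of_mem hz]
          refine ENNReal.ofReal_le_one.2 ?_
          nlinarith [hf0 n z, hf1 n z]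
        · rw [indicator_of_notMem hz, hfzero n z hz]
          simp
      have h2 := lintegral_mono (μ := μ) hb1
      rw [lintegral_indicator measurableSet_Icc, setLIntegral_one] at h2
      have h3 : μ (Icc (t n) (s n)) < ⊤ :=
        meas_compact_lt_top isCompact_Icc (hconv _ (htE n) _ (hsE n)) hμloc
      exact (lt_of_le_of_lt h2 h3).ne
    have hPn_ge : ∀ n, μ (Ioo x y) ≤ P n := by
      intro n
      have hb1 : ∀ z, (Ioo x y).indicator (fun _ => (1:ℝ≥0∞)) z
          ≤ ENNReal.ofReal ((f n z)^2) := by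
        intro z
        by_cases hz : z ∈ Ioo x y
        · rw [indicator_of_mem hz, hfmid n z ⟨hz.1.le, hz.2.le⟩]
          norm_num
        · rw [indicator_of_notMem hz]
          exact zero_le
      have h2 := lintegral_mono (μ := μ) hb1
      rwa [lintegral_indicator measurableSet_Ioo, setLIntegral_one] at h2
    have hPn_pos : ∀ n, P n ≠ 0 :=
      fun n => (lt_of_lt_of_le hμxy_pos (hPn_ge n)).ne'
    have hlamP : ∀ n, lam * P n ≤ ENNReal.ofReal ((1-2*δs n)⁻¹ / Gr n)
        + ENNReal.ofReal ((1-2*δs n)⁻¹ / Hr n) := by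
      intro n
      have hts : tsupport (f n) ⊆ E := by
        refine subset_trans (closure_minimal ?_ isClosed_Icc) (hconv _ (htE n) _ (hsE n))
        intro z hz
        by_contra hcon
        exact hz (hfzero n z hcon)
      have hcs : HasCompactSupport (f n) := HasCompactSupport.intro isCompact_Icc (hfzero n)
      have h1 := lam_le_aux E C μ lam hlam (f n) (hfdiff n) hcs hts (hPn_pos n) (hPn_fin n)
      exact le_trans h1 (hfD n)
    have hWνint : ∀ p q : ℝ, p ∈ E → q ∈ E →
        IntervalIntegrable (fun w => Real.exp (-C w)) volume p q := by
      intro p q hp hq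
      refine (hWνc.mono ?_).intervalIntegrable
      rcases le_total p q with h | h
      · rw [uIcc_of_le h]; exact hconv _ hp _ hq
      · rw [uIcc_of_ge h]; exact hconv _ hq _ hp
    have hGrpos : ∀ n, 0 < Gr n := by
      intro n
      exact intervalIntegral.intervalIntegral_pos_of_pos_on (hWνint _ _ (htE n) hx)
        (fun w _ => Real.exp_pos _) (htlt n)
    have hHrpos : ∀ n, 0 < Hr n := by
      intro n
      exact intervalIntegral.intervalIntegral_pos_of_pos_on (hWνint _ _ hy (hsE n))
        (fun w _ => Real.exp_pos _) (hsgt n)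
    have hFatou : Den ≤ liminf P atTop := by
      set gL : ℝ → ℝ≥0∞ := fun z =>
        ENNReal.ofReal ((1 - (ν (Ioo z x)).toReal / (ν (Iio x)).toReal) ^ 2) with hgL
      set gR : ℝ → ℝ≥0∞ := fun z =>
        ENNReal.ofReal ((1 - (ν (Ioo y z)).toReal / (ν (Ioi y)).toReal) ^ 2) with hgR
      have hmL : Measurable gL := by
        have h1 : Measurable (fun z => ν (Ioo z x)) := by
          refine Antitone.measurable ?_
          intro z1 z2 h
          exact measure_mono (Ioo_subset_Ioo_left h)
        have h2 : Measurable (fun z => (ν (Ioo z x)).toReal) :=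
          ENNReal.measurable_toReal.comp h1
        have h3 : Measurable (fun z => (1 - (ν (Ioo z x)).toReal / (ν (Iio x)).toReal) ^ 2) :=
          ((measurable_const.sub (h2.div_const _)).pow_const 2)
        exact ENNReal.measurable_ofReal.comp h3
      have hmR : Measurable gR := by
        have h1 : Measurable (fun z => ν (Ioo y z)) := by
          refine Monotone.measurable ?_
          intro z1 z2 h
          exact measure_mono (Ioo_subset_Ioo_right h)
        have h2 : Measurable (fun z => (ν (Ioo y z)).toReal) :=
          ENNReal.measurable_toReal.comp h1
        have h3 : Measurable (fun z => (1 - (ν (Ioo y z)).toReal / (ν (Ioi y)).toReal) ^ 2) :=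
          ((measurable_const.sub (h2.div_const _)).pow_const 2)
        exact ENNReal.measurable_ofReal.comp h3
      set T : ℝ → ℝ≥0∞ := fun z => (Ioo x y).indicator (fun _ => (1:ℝ≥0∞)) z
          + (Iio x).indicator gL z + (Ioi y).indicator gR z with hT
      have hm1 : Measurable ((Ioo x y).indicator (fun _ => (1:ℝ≥0∞))) :=
        measurable_const.indicator measurableSet_Ioo
      have hm2 : Measurable ((Iio x).indicator gL) := hmL.indicator measurableSet_Iio
      have hDen_eq : Den = ∫⁻ z, T z ∂μ := by
        simp only [hT]
        rw [lintegral_add_left (by exact hm1.add hm2 : Measurable (fun z => (Ioo x y).indicator (fun _ => (1:ℝ≥0∞)) z + (Iio x).indicator gL z)), lintegral_add_left hm1,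
          lintegral_indicator measurableSet_Ioo, lintegral_indicator measurableSet_Iio,
          lintegral_indicator measurableSet_Ioi, setLIntegral_one]
      have haeE : ∀ᵐ z ∂μ, z ∈ E := by
        rw [ae_iff]
        have he : {z : ℝ | ¬ z ∈ E} = Eᶜ := rfl
        rw [he]
        exact hμ_compl
      have haex : ∀ᵐ z ∂μ, z ≠ x := by
        rw [ae_iff]
        have he : {z : ℝ | ¬ z ≠ x} = {x} := by ext w; simp
        rw [he]
        exact hμ_single x
      have haey : ∀ᵐ z ∂μ, z ≠ y := by
        rw [ae_iff]
        have he : {z : ℝ | ¬ z ≠ y} = {y} := by ext w; simp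
        rw [he]
        exact hμ_single y
      have hpt : ∀ᵐ z ∂μ, T z ≤ liminf (fun n => ENNReal.ofReal ((f n z)^2)) atTop := by
        filter_upwards [haeE, haex, haey] with z hzE hzx hzy
        rcases lt_trichotomy z x with hlt | heq | hgt
        · -- z < x : left tail
          have hn1 : z ∉ Ioo x y := by rw [mem_Ioo]; rintro ⟨h1, h2⟩; linarith
          have hn3 : z ∉ Ioi y := by rw [mem_Ioi]; intro h1; linarith
          have hTz : T z = gL z := by
            simp only [hT]
            rw [indicator_of_notMem hn1, indicator_of_mem (mem_Iio.2 hlt),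
              indicator_of_notMem hn3, zero_add, add_zero]
          rw [hTz]
          set wr : ℝ := ∫ w in z..x, Real.exp (-C w) with hwr
          have hwr0 : 0 ≤ wr :=
            intervalIntegral.integral_nonneg hlt.le (fun w _ => (Real.exp_pos _).le)
          have hwrν : ν (Ioo z x) = ENNReal.ofReal wr := hνIoo z x hzE hx hlt.le
          have hwr_toReal : (ν (Ioo z x)).toReal = wr := by
            rw [hwrν, ENNReal.toReal_ofReal hwr0]
          have hev : ∀ᶠ n in atTop, t n < z := htcof z hzE hlt
          -- eventual lower bound on f n z
          set r : ℕ → ℝ := fun n => 1 - wr / Gr n - 2*δs n with hr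
          have hlow : ∀ᶠ n in atTop,
              ENNReal.ofReal ((max 0 (r n))^2) ≤ ENNReal.ofReal ((f n z)^2) := by
            filter_upwards [hev] with n hn
            have hzIcc : z ∈ Icc (t n) x := ⟨hn.le, hlt.le⟩
            have hsplit : (∫ w in (t n)..z, Real.exp (-C w)) + wr = Gr n := by
              rw [hwr]
              exact intervalIntegral.integral_add_adjacent_intervals
                (hWνint _ _ (htE n) hzE) (hWνint _ _ hzE hx)
            have hval : (∫ w in (t n)..z, Real.exp (-C w)) / Gr n - 2*δs n = r n := by
              rw [hr]
              have hGne : Gr n ≠ 0 := (hGrpos n).ne'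
              field_simp
              ring_nf
              nlinarith [hsplit]
            have hle1 : r n ≤ f n z := by
              rw [← hval]
              exact hflb n z hzIcc
            have hle2 : max 0 (r n) ≤ f n z := max_le (hf0 n z) hle1
            refine ENNReal.ofReal_le_ofReal ?_
            exact pow_le_pow_left₀ (le_max_left 0 (r n)) hle2 2
          -- limit of the lower bound
          have hρ_lim : Tendsto r atTop
              (nhds (1 - (ν (Ioo z x)).toReal / (ν (Iio x)).toReal)) := by
            rw [hwr_toReal]
            by_cases hfin : ν (Iio x) = ⊤
            · have hGrtop : Tendsto Gr atTop atTop := by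
                have h1 := tendsto_toReal_atTop_of_top (fun n => ν (Ioo (t n) x)) hGrfin
                  (by rw [← hfin]; exact htendL)
                exact h1.congr fun n => hGr_toReal n
              have h2 : Tendsto (fun n => wr / Gr n) atTop (nhds 0) :=
                Tendsto.div_atTop tendsto_const_nhds hGrtop
              have h3 : Tendsto r atTop (nhds (1 - 0 - 2*0)) := by
                refine Tendsto.sub (Tendsto.sub tendsto_const_nhds h2) ?_
                exact hδ0.const_mul 2
              rw [hfin]
              simp only [ENNReal.toReal_top, div_zero]
              convert h3 using 2
              norm_num
            · have hγpos : 0 < (ν (Iio x)).toReal := ENNReal.toReal_pos hν1pos.ne' hfin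
              have hGr_t : Tendsto Gr atTop (nhds (ν (Iio x)).toReal) := by
                have h1 := (ENNReal.tendsto_toReal hfin).comp htendL
                exact h1.congr fun n => hGr_toReal n
              have h2 : Tendsto (fun n => wr / Gr n) atTop
                  (nhds (wr / (ν (Iio x)).toReal)) :=
                tendsto_const_nhds.div hGr_t hγpos.ne'
              have h3 : Tendsto r atTop (nhds (1 - wr / (ν (Iio x)).toReal - 2*0)) := by
                refine Tendsto.sub (Tendsto.sub tendsto_const_nhds h2) ?_
                exact hδ0.const_mul 2
              convert h3 using 2
              norm_num
          have hρ0 : 0 ≤ 1 - (ν (Ioo z x)).toReal / (ν (Iio x)).toReal := by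
            by_cases hfin : ν (Iio x) = ⊤
            · rw [hfin]
              simp
            · have hγpos : 0 < (ν (Iio x)).toReal := ENNReal.toReal_pos hν1pos.ne' hfin
              have hle : (ν (Ioo z x)).toReal ≤ (ν (Iio x)).toReal := by
                refine ENNReal.toReal_le_toReal (by rw [hwrν]; exact ENNReal.ofReal_ne_top)
                  hfin |>.2 ?_
                exact measure_mono Ioo_subset_Iio_self
              have := div_le_one_of_le₀ hle hγpos.le
              linarith
          have hBtend : Tendsto (fun n => ENNReal.ofReal ((max 0 (r n))^2)) atTop
              (nhds (gL z)) := by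
            have h1 : Tendsto (fun n => max 0 (r n)) atTop
                (nhds (max 0 (1 - (ν (Ioo z x)).toReal / (ν (Iio x)).toReal))) :=
              tendsto_const_nhds.max hρ_lim
            rw [max_eq_right hρ0] at h1
            exact ENNReal.tendsto_ofReal (h1.pow 2)
          calc gL z = liminf (fun n => ENNReal.ofReal ((max 0 (r n))^2)) atTop :=
                (hBtend.liminf_eq).symm
            _ ≤ liminf (fun n => ENNReal.ofReal ((f n z)^2)) atTop := liminf_le_liminf hlow
        · exact absurd heq hzx
        · rcases lt_trichotomy z y with hlty | heqy | hgty
          · -- x < z < y : middle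
            have hn2 : z ∉ Iio x := by rw [mem_Iio]; intro h1; linarith
            have hn3 : z ∉ Ioi y := by rw [mem_Ioi]; intro h1; linarith
            have hTz : T z = 1 := by
              simp only [hT]
              rw [indicator_of_mem (mem_Ioo.2 ⟨hgt, hlty⟩),
                indicator_of_notMem hn2, indicator_of_notMem hn3, add_zero, add_zero]
            rw [hTz]
            have hconst : (fun n => ENNReal.ofReal ((f n z)^2)) = fun _ => 1 := by
              funext n
              rw [hfmid n z ⟨hgt.le, hlty.le⟩]
              norm_num
            rw [hconst, liminf_const]
          · exact absurd heqy hzy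
          · -- y < z : right tail
            have hn1 : z ∉ Ioo x y := by rw [mem_Ioo]; rintro ⟨h1, h2⟩; linarith
            have hn2 : z ∉ Iio x := by rw [mem_Iio]; intro h1; linarith
            have hTz : T z = gR z := by
              simp only [hT]
              rw [indicator_of_notMem hn1, indicator_of_notMem hn2,
                indicator_of_mem (mem_Ioi.2 hgty), zero_add, zero_add]
            rw [hTz]
            set wr : ℝ := ∫ w in y..z, Real.exp (-C w) with hwr
            have hwr0 : 0 ≤ wr :=
              intervalIntegral.integral_nonneg hgty.le (fun w _ => (Real.exp_pos _).le)
            have hwrν : ν (Ioo y z) = ENNReal.ofReal wr := hνIoo y z hy hzE hgty.le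
            have hwr_toReal : (ν (Ioo y z)).toReal = wr := by
              rw [hwrν, ENNReal.toReal_ofReal hwr0]
            have hev : ∀ᶠ n in atTop, z < s n := hscof z hzE hgty
            set r : ℕ → ℝ := fun n => 1 - wr / Hr n - 2*δs n with hr
            have hlow : ∀ᶠ n in atTop,
                ENNReal.ofReal ((max 0 (r n))^2) ≤ ENNReal.ofReal ((f n z)^2) := by
              filter_upwards [hev] with n hn
              have hzIcc : z ∈ Icc y (s n) := ⟨hgty.le, hn.le⟩
              have hsplit : wr + (∫ w in z..(s n), Real.exp (-C w)) = Hr n := by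
                rw [hwr]
                exact intervalIntegral.integral_add_adjacent_intervals
                  (hWνint _ _ hy hzE) (hWνint _ _ hzE (hsE n))
              have hval : (∫ w in z..(s n), Real.exp (-C w)) / Hr n - 2*δs n = r n := by
                rw [hr]
                have hHne : Hr n ≠ 0 := (hHrpos n).ne'
                field_simp
                ring_nf
                nlinarith [hsplit]
              have hle1 : r n ≤ f n z := by
                rw [← hval]
                exact hfrb n z hzIcc
              have hle2 : max 0 (r n) ≤ f n z := max_le (hf0 n z) hle1
              refine ENNReal.ofReal_le_ofReal ?_
              exact pow_le_pow_left₀ (le_max_left 0 (r n)) hle2 2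
            have hρ_lim : Tendsto r atTop
                (nhds (1 - (ν (Ioo y z)).toReal / (ν (Ioi y)).toReal)) := by
              rw [hwr_toReal]
              by_cases hfin : ν (Ioi y) = ⊤
              · have hHrtop : Tendsto Hr atTop atTop := by
                  have h1 := tendsto_toReal_atTop_of_top (fun n => ν (Ioo y (s n))) hHrfin
                    (by rw [← hfin]; exact htendR)
                  exact h1.congr fun n => hHr_toReal n
                have h2 : Tendsto (fun n => wr / Hr n) atTop (nhds 0) :=
                  Tendsto.div_atTop tendsto_const_nhds hHrtop
                have h3 : Tendsto r atTop (nhds (1 - 0 - 2*0)) := by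
                  refine Tendsto.sub (Tendsto.sub tendsto_const_nhds h2) ?_
                  exact hδ0.const_mul 2
                rw [hfin]
                simp only [ENNReal.toReal_top, div_zero]
                convert h3 using 2
                norm_num
              · have hγpos : 0 < (ν (Ioi y)).toReal := ENNReal.toReal_pos hν2pos.ne' hfin
                have hHr_t : Tendsto Hr atTop (nhds (ν (Ioi y)).toReal) := by
                  have h1 := (ENNReal.tendsto_toReal hfin).comp htendR
                  exact h1.congr fun n => hHr_toReal n
                have h2 : Tendsto (fun n => wr / Hr n) atTop
                    (nhds (wr / (ν (Ioi y)).toReal)) :=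
                  tendsto_const_nhds.div hHr_t hγpos.ne'
                have h3 : Tendsto r atTop (nhds (1 - wr / (ν (Ioi y)).toReal - 2*0)) := by
                  refine Tendsto.sub (Tendsto.sub tendsto_const_nhds h2) ?_
                  exact hδ0.const_mul 2
                convert h3 using 2
                norm_num
            have hρ0 : 0 ≤ 1 - (ν (Ioo y z)).toReal / (ν (Ioi y)).toReal := by
              by_cases hfin : ν (Ioi y) = ⊤
              · rw [hfin]
                simp
              · have hγpos : 0 < (ν (Ioi y)).toReal := ENNReal.toReal_pos hν2pos.ne' hfin
                have hle : (ν (Ioo y z)).toReal ≤ (ν (Ioi y)).toReal := by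
                  refine ENNReal.toReal_le_toReal (by rw [hwrν]; exact ENNReal.ofReal_ne_top)
                    hfin |>.2 ?_
                  exact measure_mono Ioo_subset_Ioi_self
                have := div_le_one_of_le₀ hle hγpos.le
                linarith
            have hBtend : Tendsto (fun n => ENNReal.ofReal ((max 0 (r n))^2)) atTop
                (nhds (gR z)) := by
              have h1 : Tendsto (fun n => max 0 (r n)) atTop
                  (nhds (max 0 (1 - (ν (Ioo y z)).toReal / (ν (Ioi y)).toReal))) :=
                tendsto_const_nhds.max hρ_lim
              rw [max_eq_right hρ0] at h1
              exact ENNReal.tendsto_ofReal (h1.pow 2)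
            calc gR z = liminf (fun n => ENNReal.ofReal ((max 0 (r n))^2)) atTop :=
                  (hBtend.liminf_eq).symm
              _ ≤ liminf (fun n => ENNReal.ofReal ((f n z)^2)) atTop := liminf_le_liminf hlow
      have hmeasΦ : ∀ n, Measurable (fun z => ENNReal.ofReal ((f n z)^2)) := by
        intro n
        exact ENNReal.measurable_ofReal.comp
          (((hfdiff n).continuous.measurable).pow_const 2)
      calc Den = ∫⁻ z, T z ∂μ := hDen_eq
        _ ≤ ∫⁻ z, liminf (fun n => ENNReal.ofReal ((f n z)^2)) atTop ∂μ :=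
            lintegral_mono_ae hpt
        _ ≤ liminf (fun n => ∫⁻ z, ENNReal.ofReal ((f n z)^2) ∂μ) atTop :=
            lintegral_liminf_le hmeasΦ
        _ = liminf P atTop := rfl
    calc lam * Den ≤ lam * liminf P atTop := mul_le_mul_right hFatou lam
      _ ≤ liminf (fun n => lam * P n) atTop := ennreal_mul_liminf_le lam P
      _ ≤ liminf (fun n => ENNReal.ofReal ((1-2*δs n)⁻¹ / Gr n)
            + ENNReal.ofReal ((1-2*δs n)⁻¹ / Hr n)) atTop :=
          liminf_le_liminf (Filter.Eventually.of_forall hlamP)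
      _ = Afac := hDbound_t.liminf_eq
  · -- kbarInv ≤ kapInv
    rw [hkbar, hkap]
    refine le_iInf fun x => le_iInf fun hx => le_iInf fun y => le_iInf fun hy =>
      le_iInf fun hxy => ?_
    refine le_trans (iInf_le_of_le x (iInf_le_of_le hx (iInf_le_of_le y (iInf_le_of_le hy
      (iInf_le_of_le hxy le_rfl))))) ?_
    refine mul_le_mul' ?_ ?_
    · refine add_le_add le_rfl ?_
      exact ENNReal.inv_le_inv.2 (measure_mono Ioi_subset_Ici_self)
    · refine ENNReal.inv_le_inv.2 ?_
      exact le_self_add.trans le_self_add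
end

section
/- Variational lower bound, DD-case (Theorem 3.3, '≥' direction): Assume ν(E) < ∞. Let f be continuous and strictly positive on E, let u ∈ E, and define h⁻(z) = ∫_{−M}^z e^{−C(x)} ( ∫_x^u e^{C(t)} f(t)/a(t) dt ) dx for z ≤ u and h⁺(z) = ∫_z^N e^{−C(x)} ( ∫_u^x e^{C(t)} f(t)/a(t) dt ) dx for z > u. If h⁻ and h⁺ are finite and h⁻(u) = h⁺(u), then λ^{DD} ≥ min( inf_{z ∈ (−M,u)} f(z)/h⁻(z), inf_{z ∈ (u,N)} f(z)/h⁺(z) ), where λ^{DD} = inf{ D(g) : g absolutely continuous with compact support in E, ∫_E g² dμ = 1 }. -/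
open MeasureTheory Set
open scoped ENNReal

/-- Variational lower bound, DD-case (Theorem 3.3, '≥' direction):
if `h⁻(u) = h⁺(u)` for a continuous strictly positive `f` and `u ∈ E`, then
`λ^DD ≥ min( inf_{z∈(-M,u)} f(z)/h⁻(z), inf_{z∈(u,N)} f(z)/h⁺(z) )`. -/
theorem variational_lower_bound_DD
    (M N : EReal) (hM : 0 < M) (hN : 0 < N)
    (E : Set ℝ) (hE : E = {x : ℝ | -M < (x : EReal) ∧ (x : EReal) < N})
    (a b : ℝ → ℝ)
    (ha : ContinuousOn a E) (hb : ContinuousOn b E)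
    (hapos : ∀ x ∈ E, 0 < a x)
    (θ₀ : ℝ) (hθ₀ : θ₀ ∈ E)
    (C : ℝ → ℝ) (hC : ∀ x, C x = ∫ t in θ₀..x, b t / a t)
    (μ ν : Measure ℝ)
    (hμ : μ = (volume.restrict E).withDensity fun x => ENNReal.ofReal (Real.exp (C x) / a x))
    (hν : ν = (volume.restrict E).withDensity fun x => ENNReal.ofReal (Real.exp (-C x)))
    (hνfin : ν E < ⊤)
    (f : ℝ → ℝ) (hfc : ContinuousOn f E) (hfpos : ∀ x ∈ E, 0 < f x)
    (u : ℝ) (hu : u ∈ E)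
    (hm hp : ℝ → ℝ)
    -- h⁻(z) = ∫_{-M}^z e^{-C(x)} ( ∫_x^u e^{C(t)} f(t)/a(t) dt ) dx
    (hhm : ∀ z, hm z =
        ∫ x in E ∩ Iio z, Real.exp (-C x) * ∫ t in x..u, Real.exp (C t) * f t / a t)
    -- h⁺(z) = ∫_z^N e^{-C(x)} ( ∫_u^x e^{C(t)} f(t)/a(t) dt ) dx
    (hhp : ∀ z, hp z =
        ∫ x in E ∩ Ioi z, Real.exp (-C x) * ∫ t in u..x, Real.exp (C t) * f t / a t)
    -- h⁻ and h⁺ are finite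
    (hmfin : IntegrableOn
        (fun x => Real.exp (-C x) * ∫ t in x..u, Real.exp (C t) * f t / a t) (E ∩ Iic u))
    (hpfin : IntegrableOn
        (fun x => Real.exp (-C x) * ∫ t in u..x, Real.exp (C t) * f t / a t) (E ∩ Ici u))
    -- h⁻(u) = h⁺(u)
    (hroot : hm u = hp u)
    (lam : ℝ≥0∞)
    -- λ^DD : infimum of D(g) over absolutely continuous g with compact support in E,
    -- ∫ g² dμ = 1
    (hlam : lam = ⨅ (g : ℝ → ℝ) (_ : DifferentiableOn ℝ g E) (_ : HasCompactSupport g)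
        (_ : tsupport g ⊆ E) (_ : ∫⁻ x, ENNReal.ofReal ((g x) ^ 2) ∂μ = 1),
        ∫⁻ x in E, ENNReal.ofReal ((deriv g x) ^ 2 * Real.exp (C x))) :
    min (⨅ (z : ℝ) (_ : z ∈ E ∩ Iio u), ENNReal.ofReal (f z / hm z))
        (⨅ (z : ℝ) (_ : z ∈ E ∩ Ioi u), ENNReal.ofReal (f z / hp z)) ≤ lam := by
  -- ## Basic facts about `E`
  have hEopen : IsOpen E := by
    rw [hE]
    exact (isOpen_Ioo (a := (-M : EReal)) (b := N)).preimage continuous_coe_real_ereal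
  have hEmeas : MeasurableSet E := hEopen.measurableSet
  have hIccE : ∀ {x y : ℝ}, x ∈ E → y ∈ E → Icc x y ⊆ E := by
    intro x y hx hy z hz
    rw [hE] at hx hy ⊢
    exact ⟨lt_of_lt_of_le hx.1 (EReal.coe_le_coe_iff.mpr hz.1),
      lt_of_le_of_lt (EReal.coe_le_coe_iff.mpr hz.2) hy.2⟩
  have huIccE : ∀ {x y : ℝ}, x ∈ E → y ∈ E → uIcc x y ⊆ E := by
    intro x y hx hy
    rcases le_total x y with hxy | hxy
    · rw [uIcc_of_le hxy]; exact hIccE hx hy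
    · rw [uIcc_of_ge hxy]; exact hIccE hy hx
  have hbelow : ∀ z ∈ E, ∃ z', z' ∈ E ∧ z' < z := by
    intro z hz
    rw [hE] at hz
    obtain ⟨x, hx1, hx2⟩ := EReal.lt_iff_exists_real_btwn.mp hz.1
    exact ⟨x, by rw [hE]; exact ⟨hx1, lt_trans hx2 hz.2⟩, EReal.coe_lt_coe_iff.mp hx2⟩
  have habove : ∀ z ∈ E, ∃ z', z' ∈ E ∧ z < z' := by
    intro z hz
    rw [hE] at hz
    obtain ⟨x, hx1, hx2⟩ := EReal.lt_iff_exists_real_btwn.mp hz.2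
    exact ⟨x, by rw [hE]; exact ⟨lt_trans hz.1 hx1, hx2⟩, EReal.coe_lt_coe_iff.mp hx1⟩
  -- ## Derivative and continuity of `C`
  have haE : ∀ x ∈ E, a x ≠ 0 := fun x hx => (hapos x hx).ne'
  have hba : ContinuousOn (fun t => b t / a t) E := hb.div ha haE
  have hCfun : C = fun w => ∫ t in θ₀..w, b t / a t := funext hC
  have hCd : ∀ x ∈ E, HasDerivAt C (b x / a x) x := by
    intro x hx
    rw [hCfun]
    exact intervalIntegral.integral_hasDerivAt_right
      ((hba.mono (huIccE hθ₀ hx)).intervalIntegrable)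
      (hba.stronglyMeasurableAtFilter hEopen x hx)
      (hba.continuousAt (hEopen.mem_nhds hx))
  have hCcont : ContinuousOn C E := fun x hx => (hCd x hx).continuousAt.continuousWithinAt
  have hexpC : ContinuousOn (fun x => Real.exp (C x)) E :=
    Real.continuous_exp.comp_continuousOn hCcont
  have hexpnC : ContinuousOn (fun x => Real.exp (-C x)) E :=
    Real.continuous_exp.comp_continuousOn hCcont.neg
  -- ## The auxiliary functions `G`, `ψ`, `W`, `h`
  obtain ⟨G, hGdef⟩ : ∃ G : ℝ → ℝ, G = fun t => Real.exp (C t) * f t / a t := ⟨_, rfl⟩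
  have hGcont : ContinuousOn G E := by rw [hGdef]; exact (hexpC.mul hfc).div ha haE
  have hGpos : ∀ t ∈ E, 0 < G t := by
    intro t ht; simp only [hGdef]
    exact div_pos (mul_pos (Real.exp_pos _) (hfpos t ht)) (hapos t ht)
  obtain ⟨ψ, hψdef⟩ : ∃ ψ : ℝ → ℝ, ψ = fun z => ∫ t in z..u, G t := ⟨_, rfl⟩
  have hψd : ∀ z ∈ E, HasDerivAt ψ (-G z) z := by
    intro z hz
    have h1 : HasDerivAt (fun w => ∫ t in u..w, G t) (G z) z :=
      intervalIntegral.integral_hasDerivAt_right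
        ((hGcont.mono (huIccE hu hz)).intervalIntegrable)
        (hGcont.stronglyMeasurableAtFilter hEopen z hz)
        (hGcont.continuousAt (hEopen.mem_nhds hz))
    have h2 : ψ = fun w => -∫ t in u..w, G t := by
      rw [hψdef]
      funext w
      rw [intervalIntegral.integral_symm]
    rw [h2]; exact h1.neg
  have hψcont : ContinuousOn ψ E := fun z hz => (hψd z hz).continuousAt.continuousWithinAt
  have hψnonneg : ∀ z ∈ E, z ≤ u → 0 ≤ ψ z := by
    intro z hz hzu
    simp only [hψdef]
    exact intervalIntegral.integral_nonneg hzu (fun t ht => (hGpos t (hIccE hz hu ht)).le)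
  have hψpos : ∀ z ∈ E, z < u → 0 < ψ z := by
    intro z hz hzu
    simp only [hψdef]
    exact intervalIntegral.intervalIntegral_pos_of_pos_on
      ((hGcont.mono (huIccE hz hu)).intervalIntegrable)
      (fun t ht => hGpos t (hIccE hz hu ⟨ht.1.le, ht.2.le⟩)) hzu
  have hψnonpos : ∀ z ∈ E, u ≤ z → ψ z ≤ 0 := by
    intro z hz huz
    have h1 : 0 ≤ ∫ t in u..z, G t :=
      intervalIntegral.integral_nonneg huz (fun t ht => (hGpos t (hIccE hu hz ht)).le)
    simp only [hψdef]
    rw [intervalIntegral.integral_symm]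
    linarith
  have hψneg : ∀ z ∈ E, u < z → ψ z < 0 := by
    intro z hz huz
    have h1 : 0 < ∫ t in u..z, G t :=
      intervalIntegral.intervalIntegral_pos_of_pos_on
        ((hGcont.mono (huIccE hu hz)).intervalIntegrable)
        (fun t ht => hGpos t (hIccE hu hz ⟨ht.1.le, ht.2.le⟩)) huz
    simp only [hψdef]
    rw [intervalIntegral.integral_symm]
    linarith
  obtain ⟨W, hWdef⟩ : ∃ W : ℝ → ℝ, W = fun x => Real.exp (-C x) * ψ x := ⟨_, rfl⟩
  have hWcont : ContinuousOn W E := by rw [hWdef]; exact hexpnC.mul hψcont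
  have hWraw : (fun x => Real.exp (-C x) * ∫ t in x..u, Real.exp (C t) * f t / a t) = W := by
    funext x
    simp only [hWdef, hψdef, hGdef]
  have hWpraw : (fun x => Real.exp (-C x) * ∫ t in u..x, Real.exp (C t) * f t / a t)
      = fun x => -W x := by
    funext x
    simp only [hWdef, hψdef, hGdef]
    rw [intervalIntegral.integral_symm]
    ring
  have hWfinm : IntegrableOn W (E ∩ Iic u) := hWraw ▸ hmfin
  have hWfinp : IntegrableOn (fun x => -W x) (E ∩ Ici u) := hWpraw ▸ hpfin
  have hm_eq : ∀ z, hm z = ∫ x in E ∩ Iio z, W x := by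
    intro z; rw [hhm z, hWraw]
  have hp_eq : ∀ z, hp z = ∫ x in E ∩ Ioi z, -W x := by
    intro z; rw [hhp z, hWpraw]
  -- ## Additivity formulas for `hm`, `hp`
  have hm_add : ∀ z₁ z₂, z₁ ∈ E → z₂ ∈ E → z₁ ≤ z₂ → z₂ ≤ u →
      hm z₂ = hm z₁ + ∫ x in z₁..z₂, W x := by
    intro z₁ z₂ h1 h2 h12 h2u
    have hsub1 : E ∩ Iio z₁ ⊆ E ∩ Iic u := fun x hx =>
      ⟨hx.1, (hx.2.trans_le (h12.trans h2u)).le⟩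
    have hsub2 : Ico z₁ z₂ ⊆ E ∩ Iic u := fun x hx =>
      ⟨hIccE h1 h2 ⟨hx.1, hx.2.le⟩, hx.2.le.trans h2u⟩
    have hset : E ∩ Iio z₂ = (E ∩ Iio z₁) ∪ Ico z₁ z₂ := by
      ext x
      constructor
      · rintro ⟨hxE, hx2⟩
        by_cases hx1 : x < z₁
        · exact Or.inl ⟨hxE, hx1⟩
        · exact Or.inr ⟨not_lt.mp hx1, hx2⟩
      · rintro (⟨hxE, hx1⟩ | ⟨hxa, hxb⟩)
        · exact ⟨hxE, hx1.trans_le h12⟩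
        · exact ⟨hIccE h1 h2 ⟨hxa, hxb.le⟩, hxb⟩
    have hdisj : Disjoint (E ∩ Iio z₁) (Ico z₁ z₂) := by
      rw [Set.disjoint_left]
      rintro x ⟨_, hx⟩ hx'
      exact absurd hx (not_lt.mpr hx'.1)
    rw [hm_eq, hm_eq, hset,
      setIntegral_union hdisj measurableSet_Ico (hWfinm.mono_set hsub1) (hWfinm.mono_set hsub2),
      intervalIntegral.integral_of_le h12, integral_Ico_eq_integral_Ioo,
      integral_Ioc_eq_integral_Ioo]
  have hp_add : ∀ z₁ z₂, z₁ ∈ E → z₂ ∈ E → z₁ ≤ z₂ → u ≤ z₁ →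
      hp z₁ = hp z₂ - ∫ x in z₁..z₂, W x := by
    intro z₁ z₂ h1 h2 h12 hu1
    have hsub1 : E ∩ Ioi z₂ ⊆ E ∩ Ici u := fun x hx =>
      ⟨hx.1, hu1.trans (h12.trans hx.2.le)⟩
    have hsub2 : Ioc z₁ z₂ ⊆ E ∩ Ici u := fun x hx =>
      ⟨hIccE h1 h2 ⟨hx.1.le, hx.2⟩, hu1.trans hx.1.le⟩
    have hset : E ∩ Ioi z₁ = (E ∩ Ioi z₂) ∪ Ioc z₁ z₂ := by
      ext x
      constructor
      · rintro ⟨hxE, hx1⟩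
        by_cases hx2 : z₂ < x
        · exact Or.inl ⟨hxE, hx2⟩
        · exact Or.inr ⟨hx1, not_lt.mp hx2⟩
      · rintro (⟨hxE, hx2⟩ | ⟨hxa, hxb⟩)
        · exact ⟨hxE, h12.trans_lt hx2⟩
        · exact ⟨hIccE h1 h2 ⟨hxa.le, hxb⟩, hxa⟩
    have hdisj : Disjoint (E ∩ Ioi z₂) (Ioc z₁ z₂) := by
      rw [Set.disjoint_left]
      rintro x ⟨_, hx⟩ hx'
      exact absurd hx (not_lt.mpr hx'.2)
    have hUnion := setIntegral_union hdisj measurableSet_Ioc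
      (hWfinp.mono_set hsub1) (hWfinp.mono_set hsub2)
    rw [hp_eq, hp_eq, hset, hUnion, intervalIntegral.integral_of_le h12, integral_neg, integral_neg]
    ring
  -- ## The glued function `h` and its properties
  obtain ⟨h, hhdef⟩ : ∃ h : ℝ → ℝ, h = fun z => if z ≤ u then hm z else hp z := ⟨_, rfl⟩
  have hhval_le : ∀ z, z ≤ u → h z = hm z := by intro z hz; simp [hhdef, hz]
  have hhval_gt : ∀ z, u < z → h z = hp z := by intro z hz; simp [hhdef, not_le.mpr hz]
  have hheq : ∀ w ∈ E, h w = hm u + ∫ x in u..w, W x := by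
    intro w hw
    by_cases hwu : w ≤ u
    · have h1 := hm_add w u hw hu hwu le_rfl
      have h2 : ∫ x in u..w, W x = -∫ x in w..u, W x := intervalIntegral.integral_symm w u
      rw [hhval_le w hwu]
      linarith
    · push_neg at hwu
      have h1 := hp_add u w hu hw hwu.le le_rfl
      rw [hhval_gt w hwu]
      linarith [hroot]
  have hhd : ∀ z ∈ E, HasDerivAt h (W z) z := by
    intro z hz
    have h1 : HasDerivAt (fun w => hm u + ∫ x in u..w, W x) (W z) z := by
      have h2 := intervalIntegral.integral_hasDerivAt_right
        ((hWcont.mono (huIccE hu hz)).intervalIntegrable)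
        (hWcont.stronglyMeasurableAtFilter hEopen z hz)
        (hWcont.continuousAt (hEopen.mem_nhds hz))
      exact h2.const_add (hm u)
    refine h1.congr_of_eventuallyEq ?_
    filter_upwards [hEopen.mem_nhds hz] with w hw
    exact hheq w hw
  have hhcont : ContinuousOn h E := fun x hx => (hhd x hx).continuousAt.continuousWithinAt
  have hhpos : ∀ z ∈ E, 0 < h z := by
    intro z hz
    by_cases hzu : z ≤ u
    · obtain ⟨z', hz'E, hz'⟩ := hbelow z hz
      have h0 : 0 ≤ hm z' := by
        rw [hm_eq]
        refine setIntegral_nonneg (hEmeas.inter measurableSet_Iio) fun x hx => ?_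
        have hxu : x ≤ u := ((hx.2.trans hz').le).trans hzu
        simp only [hWdef]
        exact mul_nonneg (Real.exp_pos _).le (hψnonneg x hx.1 hxu)
      have hpos : 0 < ∫ x in z'..z, W x := by
        refine intervalIntegral.intervalIntegral_pos_of_pos_on
          ((hWcont.mono (huIccE hz'E hz)).intervalIntegrable) (fun x hx => ?_) hz'
        have hxE : x ∈ E := hIccE hz'E hz ⟨hx.1.le, hx.2.le⟩
        simp only [hWdef]
        exact mul_pos (Real.exp_pos _) (hψpos x hxE (hx.2.trans_le hzu))
      have hadd := hm_add z' z hz'E hz hz'.le hzu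
      rw [hhval_le z hzu]
      linarith
    · push_neg at hzu
      obtain ⟨z'', hz''E, hz''⟩ := habove z hz
      have h0 : 0 ≤ hp z'' := by
        rw [hp_eq]
        refine setIntegral_nonneg (hEmeas.inter measurableSet_Ioi) fun x hx => ?_
        have hxu : u ≤ x := (hzu.trans (hz''.trans hx.2)).le
        have hψx := hψnonpos x hx.1 hxu
        simp only [hWdef]
        nlinarith [Real.exp_pos (-C x)]
      have hpos : 0 < ∫ x in z..z'', -W x := by
        refine intervalIntegral.intervalIntegral_pos_of_pos_on
          (((hWcont.mono (huIccE hz hz''E)).neg).intervalIntegrable) (fun x hx => ?_) hz''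
        have hxE : x ∈ E := hIccE hz hz''E ⟨hx.1.le, hx.2.le⟩
        have hψx := hψneg x hxE (hzu.trans hx.1)
        simp only [hWdef]
        nlinarith [Real.exp_pos (-C x)]
      have hint : ∫ x in z..z'', -W x = -∫ x in z..z'', W x := by
        rw [show (fun x => -W x) = fun x => -(W x) from rfl]
        exact intervalIntegral.integral_neg
      have hadd := hp_add z z'' hz hz''E hz''.le hzu.le
      rw [hhval_gt z hzu]
      linarith
  -- ## Setting up the infima
  set I₁ := ⨅ (z : ℝ) (_ : z ∈ E ∩ Iio u), ENNReal.ofReal (f z / hm z) with hI₁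
  set I₂ := ⨅ (z : ℝ) (_ : z ∈ E ∩ Ioi u), ENNReal.ofReal (f z / hp z) with hI₂
  have hIle1 : ∀ z ∈ E, z < u → I₁ ≤ ENNReal.ofReal (f z / hm z) := by
    intro z hz hzu
    rw [hI₁]
    exact iInf₂_le z ⟨hz, hzu⟩
  have hIle2 : ∀ z ∈ E, u < z → I₂ ≤ ENNReal.ofReal (f z / hp z) := by
    intro z hz hzu
    rw [hI₂]
    exact iInf₂_le z ⟨hz, hzu⟩
  obtain ⟨z₁, hz₁E, hz₁u⟩ := hbelow u hu
  have hctop : min I₁ I₂ ≠ ⊤ :=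
    ne_top_of_le_ne_top ENNReal.ofReal_ne_top ((min_le_left _ _).trans (hIle1 z₁ hz₁E hz₁u))
  rcases eq_or_ne (min I₁ I₂) 0 with hc0 | hc0
  · rw [hc0]; exact zero_le
  set c₀ := (min I₁ I₂).toReal with hc₀def
  have hc₀nn : 0 ≤ c₀ := ENNReal.toReal_nonneg
  have hcofReal : ENNReal.ofReal c₀ = min I₁ I₂ := ENNReal.ofReal_toReal hctop
  -- pointwise bound `c₀ * h ≤ f` away from `u`
  have hfh : ∀ x ∈ E, x ≠ u → c₀ * h x ≤ f x := by
    intro x hx hxu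
    rcases lt_or_gt_of_ne hxu with hlt | hgt
    · have hmx : 0 < hm x := by
        have := hhpos x hx; rwa [hhval_le x hlt.le] at this
      have h1 : min I₁ I₂ ≤ ENNReal.ofReal (f x / hm x) :=
        (min_le_left _ _).trans (hIle1 x hx hlt)
      have h2 : c₀ ≤ f x / hm x := by
        have h3 := ENNReal.toReal_mono ENNReal.ofReal_ne_top h1
        rwa [ENNReal.toReal_ofReal (div_nonneg (hfpos x hx).le hmx.le)] at h3
      rw [hhval_le x hlt.le]
      exact (le_div_iff₀ hmx).mp h2
    · have hpx : 0 < hp x := by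
        have := hhpos x hx; rwa [hhval_gt x hgt] at this
      have h1 : min I₁ I₂ ≤ ENNReal.ofReal (f x / hp x) :=
        (min_le_right _ _).trans (hIle2 x hx hgt)
      have h2 : c₀ ≤ f x / hp x := by
        have h3 := ENNReal.toReal_mono ENNReal.ofReal_ne_top h1
        rwa [ENNReal.toReal_ofReal (div_nonneg (hfpos x hx).le hpx.le)] at h3
      rw [hhval_gt x hgt]
      exact (le_div_iff₀ hpx).mp h2
  -- ## Reduce to a single test function `g`
  rw [hlam]
  refine le_iInf fun g => le_iInf fun hg₁ => le_iInf fun hg₂ => le_iInf fun hg₃ =>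
    le_iInf fun hg₄ => ?_
  by_cases hD : (∫⁻ x in E, ENNReal.ofReal ((deriv g x) ^ 2 * Real.exp (C x))) = ⊤
  · rw [hD]; exact le_top
  -- `g` is continuous everywhere
  have hgc : Continuous g := by
    rw [continuous_iff_continuousAt]
    intro x
    by_cases hx : x ∈ E
    · exact (hg₁.differentiableAt (hEopen.mem_nhds hx)).continuousAt
    · have hx' : x ∈ (tsupport g)ᶜ := fun hmem => hx (hg₃ hmem)
      have hev : g =ᶠ[nhds x] (fun _ => (0 : ℝ)) := by
        filter_upwards [(isClosed_tsupport g).isOpen_compl.mem_nhds hx'] with w hw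
        exact image_eq_zero_of_notMem_tsupport hw
      exact ContinuousAt.congr continuousAt_const hev.symm
  -- the support is nonempty (else the normalization fails)
  rcases (tsupport g).eq_empty_or_nonempty with hKe | hKne
  · exfalso
    have hg0 : g = fun _ => (0 : ℝ) := by
      funext x
      exact image_eq_zero_of_notMem_tsupport (by rw [hKe]; exact notMem_empty x)
    rw [hg0] at hg₄
    norm_num at hg₄
  -- choose a compact interval `[α, β] ⊆ E` containing the support with `g α = g β = 0`
  have hKcpt : IsCompact (tsupport g) := hg₂
  have hα₀K : sInf (tsupport g) ∈ tsupport g := hKcpt.sInf_mem hKne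
  have hβ₀K : sSup (tsupport g) ∈ tsupport g := hKcpt.sSup_mem hKne
  have hα₀E : sInf (tsupport g) ∈ E := hg₃ hα₀K
  have hβ₀E : sSup (tsupport g) ∈ E := hg₃ hβ₀K
  obtain ⟨α, hαE, hαlt⟩ := hbelow _ hα₀E
  obtain ⟨β, hβE, hβgt⟩ := habove _ hβ₀E
  have hαβ : α ≤ β :=
    ((hαlt.trans_le ((le_csSup hKcpt.bddAbove hα₀K))).trans hβgt).le
  have hKIcc : tsupport g ⊆ Icc α β := fun k hk =>
    ⟨hαlt.le.trans (csInf_le hKcpt.bddBelow hk), (le_csSup hKcpt.bddAbove hk).trans hβgt.le⟩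
  have hg0 : ∀ x, x ∉ Icc α β → g x = 0 := fun x hx =>
    image_eq_zero_of_notMem_tsupport (fun hk => hx (hKIcc hk))
  have hgα : g α = 0 := image_eq_zero_of_notMem_tsupport
    (fun hk => absurd (csInf_le hKcpt.bddBelow hk) (not_le.mpr hαlt))
  have hgβ : g β = 0 := image_eq_zero_of_notMem_tsupport
    (fun hk => absurd (le_csSup hKcpt.bddAbove hk) (not_le.mpr hβgt))
  have hIccE' : Icc α β ⊆ E := hIccE hαE hβE
  have hgd : ∀ x ∈ E, HasDerivAt g (deriv g x) x := fun x hx =>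
    (hg₁.differentiableAt (hEopen.mem_nhds hx)).hasDerivAt
  -- ## Normalization: `∫_{[α,β]} g² e^C / a = 1`
  have hTnnE : ∀ x ∈ E, 0 ≤ g x ^ 2 * (Real.exp (C x) / a x) := fun x hx =>
    mul_nonneg (sq_nonneg _) (div_nonneg (Real.exp_pos _).le (hapos x hx).le)
  have hTcont : ContinuousOn (fun x => g x ^ 2 * (Real.exp (C x) / a x)) E :=
    (hgc.continuousOn.pow 2).mul (hexpC.div ha haE)
  have hTint : IntegrableOn (fun x => g x ^ 2 * (Real.exp (C x) / a x)) E := by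
    have h1 : IntegrableOn (fun x => g x ^ 2 * (Real.exp (C x) / a x)) (Icc α β) :=
      (hTcont.mono hIccE').integrableOn_Icc
    have h2 : IntegrableOn (fun x => g x ^ 2 * (Real.exp (C x) / a x)) (E \ Icc α β) := by
      refine (integrableOn_congr_fun (g := fun _ => (0 : ℝ)) (fun x hx => ?_)
        (hEmeas.diff measurableSet_Icc)).mpr (integrableOn_zero)
      simp [hg0 x hx.2]
    exact (h1.union h2).mono_set
      (fun x hx => if hmem : x ∈ Icc α β then Or.inl hmem else Or.inr ⟨hx, hmem⟩)
  have hρae : AEMeasurable (fun x => ENNReal.ofReal (Real.exp (C x) / a x))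
      (volume.restrict E) :=
    ENNReal.measurable_ofReal.comp_aemeasurable ((hexpC.div ha haE).aemeasurable hEmeas)
  have hgmeas : AEMeasurable (fun x => ENNReal.ofReal (g x ^ 2)) (volume.restrict E) :=
    (ENNReal.measurable_ofReal.comp ((hgc.pow 2).measurable)).aemeasurable
  rw [hμ, lintegral_withDensity_eq_lintegral_mul₀ hρae hgmeas] at hg₄
  have hg₄' : ∫⁻ x in E, ENNReal.ofReal (g x ^ 2 * (Real.exp (C x) / a x)) = 1 := by
    rw [← hg₄]
    refine lintegral_congr_ae ?_
    filter_upwards [ae_restrict_mem hEmeas] with x hx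
    simp only [Pi.mul_apply]
    rw [mul_comm (g x ^ 2) (Real.exp (C x) / a x),
      ENNReal.ofReal_mul (div_nonneg (Real.exp_pos _).le (hapos x hx).le)]
  have hTnorm : ∫ x in Icc α β, g x ^ 2 * (Real.exp (C x) / a x) = 1 := by
    have h1 : ENNReal.ofReal (∫ x in E, g x ^ 2 * (Real.exp (C x) / a x)) = 1 := by
      rw [ofReal_integral_eq_lintegral_ofReal hTint
        ((ae_restrict_iff' hEmeas).mpr (ae_of_all _ hTnnE))]
      exact hg₄'
    have h2 : ∫ x in E, g x ^ 2 * (Real.exp (C x) / a x) = 1 := ENNReal.ofReal_eq_one.mp h1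
    have h3 := integral_inter_add_diff (s := E) (t := Icc α β)
      measurableSet_Icc hTint (μ := volume)
    have h4 : ∫ x in E \ Icc α β, g x ^ 2 * (Real.exp (C x) / a x) = 0 := by
      have hEq : EqOn (fun x => g x ^ 2 * (Real.exp (C x) / a x)) (fun _ => (0 : ℝ))
          (E \ Icc α β) := fun x hx => by simp [hg0 x hx.2]
      rw [setIntegral_congr_fun (hEmeas.diff measurableSet_Icc) hEq]
      simp
    rw [Set.inter_eq_self_of_subset_right hIccE'] at h3
    linarith
  -- ## Integrability of the energy density and of `deriv g`
  have hvnn : ∀ x, 0 ≤ (deriv g x) ^ 2 * Real.exp (C x) := fun x =>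
    mul_nonneg (sq_nonneg _) (Real.exp_pos _).le
  have hvmeas : AEStronglyMeasurable (fun x => (deriv g x) ^ 2 * Real.exp (C x))
      (volume.restrict (Icc α β)) :=
    (((measurable_deriv g).pow_const 2).aestronglyMeasurable).mul
      ((hexpC.mono hIccE').aestronglyMeasurable measurableSet_Icc)
  have hvint : IntegrableOn (fun x => (deriv g x) ^ 2 * Real.exp (C x)) (Icc α β) := by
    refine ⟨hvmeas, ?_⟩
    rw [hasFiniteIntegral_iff_ofReal (ae_of_all _ hvnn)]
    exact lt_of_le_of_lt (lintegral_mono_set hIccE') (lt_top_iff_ne_top.mpr hD)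
  obtain ⟨x₀, hx₀mem, hx₀min⟩ :=
    isCompact_Icc.exists_isMinOn (nonempty_Icc.mpr hαβ) (hexpC.mono hIccE')
  have hm0 : 0 < Real.exp (C x₀) := Real.exp_pos _
  have hmle : ∀ x ∈ Icc α β, Real.exp (C x₀) ≤ Real.exp (C x) := fun x hx => hx₀min hx
  have hg'int : IntegrableOn (deriv g) (Icc α β) := by
    have hbint : IntegrableOn
        (fun x => (1 + ((deriv g x) ^ 2 * Real.exp (C x)) / Real.exp (C x₀)) / 2)
        (Icc α β) :=
      ((integrableOn_const measure_Icc_lt_top.ne).add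
        (hvint.div_const _)).div_const 2
    refine Integrable.mono' hbint ((measurable_deriv g).aestronglyMeasurable) ?_
    refine (ae_restrict_iff' measurableSet_Icc).mpr (ae_of_all _ (fun x hx => ?_))
    have h1 : (deriv g x) ^ 2 * Real.exp (C x₀) ≤ (deriv g x) ^ 2 * Real.exp (C x) :=
      mul_le_mul_of_nonneg_left (hmle x hx) (sq_nonneg _)
    have h2 : (deriv g x) ^ 2 ≤ ((deriv g x) ^ 2 * Real.exp (C x)) / Real.exp (C x₀) :=
      (le_div_iff₀ hm0).mpr h1
    rw [Real.norm_eq_abs]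
    nlinarith [sq_nonneg (|deriv g x| - 1), sq_abs (deriv g x), abs_nonneg (deriv g x)]
  -- ## The derivative of `q = g²/h`
  obtain ⟨Q, hQdef⟩ : ∃ Q : ℝ → ℝ,
      Q = fun x => (2 * g x * deriv g x * h x - g x ^ 2 * W x) / h x ^ 2 := ⟨_, rfl⟩
  have hqd : ∀ x ∈ E, HasDerivAt (fun y => g y ^ 2 / h y) (Q x) x := by
    intro x hx
    have h1 : HasDerivAt (fun y => g y ^ 2) (2 * g x * deriv g x) x := by
      have h2 := (hgd x hx).fun_pow 2
      refine h2.congr_deriv ?_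
      push_cast
      ring
    have h2 := h1.fun_div (hhd x hx) (hhpos x hx).ne'
    refine h2.congr_deriv ?_
    simp only [hQdef]
  -- ## Integrability facts on `[α, β]`
  have hhne : ∀ x ∈ Icc α β, h x ≠ 0 := fun x hx => (hhpos x (hIccE' hx)).ne'
  have hφ₁cont : ContinuousOn (fun x => 2 * g x * h x * ψ x / h x ^ 2) (Icc α β) := by
    refine ContinuousOn.div ?_ ((hhcont.mono hIccE').pow 2)
      (fun x hx => pow_ne_zero 2 (hhne x hx))
    exact ((continuousOn_const.mul hgc.continuousOn).mul (hhcont.mono hIccE')).mul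
      (hψcont.mono hIccE')
  have hφ₂cont : ContinuousOn (fun x => g x ^ 2 * W x * ψ x / h x ^ 2) (Icc α β) := by
    refine ContinuousOn.div ?_ ((hhcont.mono hIccE').pow 2)
      (fun x hx => pow_ne_zero 2 (hhne x hx))
    exact ((hgc.continuousOn.pow 2).mul (hWcont.mono hIccE')).mul (hψcont.mono hIccE')
  obtain ⟨A, hA⟩ := isCompact_Icc.exists_bound_of_continuousOn hφ₁cont
  have hQψint : IntegrableOn (fun x => Q x * ψ x) (Icc α β) := by
    have h1 : IntegrableOn (fun x => deriv g x * (2 * g x * h x * ψ x / h x ^ 2))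
        (Icc α β) := by
      refine Integrable.mono' (hg'int.abs.const_mul A)
        (((measurable_deriv g).aestronglyMeasurable).mul
          (hφ₁cont.aestronglyMeasurable measurableSet_Icc)) ?_
      refine (ae_restrict_iff' measurableSet_Icc).mpr (ae_of_all _ fun x hx => ?_)
      have hAx := hA x hx
      rw [Real.norm_eq_abs] at hAx
      rw [Real.norm_eq_abs, abs_mul]
      nlinarith [abs_nonneg (deriv g x), abs_nonneg (2 * g x * h x * ψ x / h x ^ 2)]
    have h2 : IntegrableOn (fun x => g x ^ 2 * W x * ψ x / h x ^ 2) (Icc α β) :=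
      hφ₂cont.integrableOn_Icc
    have h3 : (fun x => Q x * ψ x) =
        fun x => deriv g x * (2 * g x * h x * ψ x / h x ^ 2)
          - g x ^ 2 * W x * ψ x / h x ^ 2 := by
      funext x
      simp only [hQdef]
      ring
    rw [h3]
    exact h1.sub h2
  have hqGcont : ContinuousOn (fun x => g x ^ 2 / h x * G x) (Icc α β) :=
    ((hgc.continuousOn.pow 2).div (hhcont.mono hIccE') hhne).mul (hGcont.mono hIccE')
  have hqGint : IntegrableOn (fun x => g x ^ 2 / h x * G x) (Icc α β) :=
    hqGcont.integrableOn_Icc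
  have hqGnegint : IntegrableOn (fun x => g x ^ 2 / h x * -G x) (Icc α β) := by
    have h1 : (fun x => g x ^ 2 / h x * -G x) = fun x => -(g x ^ 2 / h x * G x) := by
      funext x; ring
    rw [h1]
    exact hqGint.neg
  -- ## Integration by parts (fundamental theorem of calculus)
  have hFd : ∀ x ∈ uIcc α β,
      HasDerivAt (fun y => g y ^ 2 / h y * ψ y) (Q x * ψ x + g x ^ 2 / h x * -G x) x := by
    intro x hx
    rw [uIcc_of_le hαβ] at hx
    exact (hqd x (hIccE' hx)).mul (hψd x (hIccE' hx))
  have hF'int : IntervalIntegrable (fun x => Q x * ψ x + g x ^ 2 / h x * -G x) volume α β :=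
    (intervalIntegrable_iff_integrableOn_Icc_of_le hαβ).mpr (hQψint.add hqGnegint)
  have hFTC := intervalIntegral.integral_eq_sub_of_hasDerivAt hFd hF'int
  have hIBP : ∫ x in α..β, Q x * ψ x = ∫ x in α..β, g x ^ 2 / h x * G x := by
    have h1 : ∫ x in α..β, (Q x * ψ x + g x ^ 2 / h x * -G x) = 0 := by
      rw [hFTC]
      simp [hgα, hgβ]
    have h2 := intervalIntegral.integral_add
      ((intervalIntegrable_iff_integrableOn_Icc_of_le hαβ).mpr hQψint)
      ((intervalIntegrable_iff_integrableOn_Icc_of_le hαβ).mpr hqGnegint)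
    rw [h2] at h1
    have h3 : ∫ x in α..β, g x ^ 2 / h x * -G x = -∫ x in α..β, g x ^ 2 / h x * G x := by
      rw [show (fun x => g x ^ 2 / h x * -G x) = fun x => -(g x ^ 2 / h x * G x) from
        funext fun x => by ring]
      exact intervalIntegral.integral_neg
    linarith
  -- ## The key pointwise inequality
  have hψW : ∀ x, ψ x = Real.exp (C x) * W x := by
    intro x
    simp only [hWdef]
    rw [← mul_assoc, ← Real.exp_add]
    simp
  have hkey : ∀ x ∈ Icc α β, Q x * ψ x ≤ (deriv g x) ^ 2 * Real.exp (C x) := by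
    intro x hx
    have hxE := hIccE' hx
    have hh0 := hhpos x hxE
    have heq : Q x * ψ x
        = Real.exp (C x) * ((deriv g x) ^ 2 - (deriv g x - g x * (W x / h x)) ^ 2) := by
      simp only [hQdef]
      rw [hψW x]
      field_simp
      ring
    rw [heq]
    nlinarith [sq_nonneg (deriv g x - g x * (W x / h x)), Real.exp_pos (C x)]
  -- ## Comparison with the infimum
  have hstep1 : c₀ ≤ ∫ x in Icc α β, g x ^ 2 / h x * G x := by
    have hu_ae : ∀ᵐ (x : ℝ) ∂volume, x ≠ u := by
      rw [ae_iff]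
      have hset : {x : ℝ | ¬x ≠ u} = {u} := by ext x; simp
      rw [hset]
      exact measure_singleton u
    have hmono : ∫ x in Icc α β, c₀ * (g x ^ 2 * (Real.exp (C x) / a x))
        ≤ ∫ x in Icc α β, g x ^ 2 / h x * G x := by
      refine setIntegral_mono_on_ae ((hTint.mono_set hIccE').const_mul c₀) hqGint
        measurableSet_Icc ?_
      filter_upwards [hu_ae] with x hxu hxmem
      have hxE := hIccE' hxmem
      have hh0 := hhpos x hxE
      have hc₀f : c₀ * h x ≤ f x := hfh x hxE hxu
      have hqG : g x ^ 2 / h x * G x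
          = (f x / h x) * (g x ^ 2 * (Real.exp (C x) / a x)) := by
        simp only [hGdef]
        ring
      rw [hqG]
      exact mul_le_mul_of_nonneg_right ((le_div_iff₀ hh0).mpr hc₀f) (hTnnE x hxE)
    calc c₀ = c₀ * ∫ x in Icc α β, g x ^ 2 * (Real.exp (C x) / a x) := by
          rw [hTnorm, mul_one]
      _ = ∫ x in Icc α β, c₀ * (g x ^ 2 * (Real.exp (C x) / a x)) :=
          (integral_const_mul c₀ _).symm
      _ ≤ _ := hmono
  have hstep2 : ∫ x in α..β, Q x * ψ x ≤ ∫ x in α..β, (deriv g x) ^ 2 * Real.exp (C x) :=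
    intervalIntegral.integral_mono_on hαβ
      ((intervalIntegrable_iff_integrableOn_Icc_of_le hαβ).mpr hQψint)
      ((intervalIntegrable_iff_integrableOn_Icc_of_le hαβ).mpr hvint) hkey
  have hfinal : c₀ ≤ ∫ x in α..β, (deriv g x) ^ 2 * Real.exp (C x) := by
    calc c₀ ≤ ∫ x in Icc α β, g x ^ 2 / h x * G x := hstep1
      _ = ∫ x in Ioc α β, g x ^ 2 / h x * G x := integral_Icc_eq_integral_Ioc
      _ = ∫ x in α..β, g x ^ 2 / h x * G x := (intervalIntegral.integral_of_le hαβ).symm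
      _ = ∫ x in α..β, Q x * ψ x := hIBP.symm
      _ ≤ _ := hstep2
  calc min I₁ I₂ = ENNReal.ofReal c₀ := hcofReal.symm
    _ ≤ ENNReal.ofReal (∫ x in α..β, (deriv g x) ^ 2 * Real.exp (C x)) :=
        ENNReal.ofReal_le_ofReal hfinal
    _ = ENNReal.ofReal (∫ x in Ioc α β, (deriv g x) ^ 2 * Real.exp (C x)) := by
        rw [intervalIntegral.integral_of_le hαβ]
    _ = ∫⁻ x in Ioc α β, ENNReal.ofReal ((deriv g x) ^ 2 * Real.exp (C x)) := by
        rw [ofReal_integral_eq_lintegral_ofReal (hvint.mono_set Ioc_subset_Icc_self)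
          ((ae_restrict_iff' measurableSet_Ioc).mpr (ae_of_all _ fun x _ => hvnn x))]
    _ ≤ ∫⁻ x in E, ENNReal.ofReal ((deriv g x) ^ 2 * Real.exp (C x)) :=
        lintegral_mono_set (fun x hx => hIccE' (Ioc_subset_Icc_self hx))
end
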